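/- arXiv:2001.02189 — 4 statements merged into one kernel-verified Lean document; each statement's English description precedes it below -/
import Mathlib

section
/- Let T be a finite tree with n(T) ≥ 2. Then gp(T\bar{T}) = n(T) + 1 if the diameter of T equals 4, and gp(T\bar{T}) = n(T) otherwise. -/
open SimpleGraph

variable {V : Type*}

/-- `v` lies on a geodesic (shortest path) between `u` and `w` in `G`. -/
def liesOnGeodesic (G : SimpleGraph V) (u v w : V) : Prop :=
  G.Reachable u w ∧ G.dist u v + G.dist v w = G.dist u w

/-- `S` is a general position set in `G`: no element of `S` lies on a geodesic
between two other elements of `S`. -/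
def isGenPosSet (G : SimpleGraph V) (S : Set V) : Prop :=
  ∀ u ∈ S, ∀ v ∈ S, ∀ w ∈ S, u ≠ v → v ≠ w → u ≠ w → ¬ liesOnGeodesic G u v w

/-- The general position number `gp(G)` of `G`. -/
noncomputable def gpNum (G : SimpleGraph V) : ℕ :=
  sSup {n : ℕ | ∃ S : Set V, isGenPosSet G S ∧ S.ncard = n}

/-- `S` is a `3`-general position set in `G`: no three vertices of `S` lie on a
common geodesic of length at most `3`. -/
def isGP3Set (G : SimpleGraph V) (S : Set V) : Prop :=
  ∀ u ∈ S, ∀ v ∈ S, ∀ w ∈ S, u ≠ v → v ≠ w → u ≠ w →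
    ¬ (liesOnGeodesic G u v w ∧ G.dist u w ≤ 3)

/-- The `3`-general position number `gp₃(G)` of `G`. -/
noncomputable def gp3Num (G : SimpleGraph V) : ℕ :=
  sSup {n : ℕ | ∃ S : Set V, isGP3Set G S ∧ S.ncard = n}

/-- The complementary prism `G\bar{G}`: the disjoint union of `G` (left copy) and
its complement `Gᶜ` (right copy), together with the perfect matching joining each
vertex to its copy. -/
def compPrism (G : SimpleGraph V) : SimpleGraph (V ⊕ V) where
  Adj x y :=
    match x, y with
    | Sum.inl a, Sum.inl b => G.Adj a b
    | Sum.inr a, Sum.inr b => Gᶜ.Adj a b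
    | Sum.inl a, Sum.inr b => a = b
    | Sum.inr a, Sum.inl b => a = b
  symm := by
    constructor
    rintro (a | a) (b | b) h
    · exact (G.adj_comm a b).mp h
    · exact Eq.symm h
    · exact Eq.symm h
    · exact (Gᶜ.adj_comm a b).mp h
  loopless := by
    constructor
    rintro (a | a) h
    · exact G.loopless.irrefl a h
    · exact Gᶜ.loopless.irrefl a h

/-- The eccentricity of a vertex: the maximum distance to another vertex. -/
noncomputable def ecc (G : SimpleGraph V) (v : V) : ℕ :=
  sSup (Set.range (G.dist v))

/-- The radius of a graph: the minimum eccentricity. -/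
noncomputable def rad (G : SimpleGraph V) : ℕ :=
  sInf (Set.range (ecc G))

/-- The diameter of a graph: the maximum distance between two vertices. -/
noncomputable def graphDiam (G : SimpleGraph V) : ℕ :=
  sSup {n : ℕ | ∃ u v : V, G.dist u v = n}

/-- `\bar{gp}₃(G)`: the maximum, over all `gp₃`-sets `S` of `G`, of the `3`-general
position number of the subgraph of `Gᶜ` induced by the vertices outside `S`. -/
noncomputable def barGp3 (G : SimpleGraph V) : ℕ :=
  sSup {n : ℕ | ∃ S : Set V, isGP3Set G S ∧ S.ncard = gp3Num G ∧
          gp3Num ((Gᶜ).induce Sᶜ) = n}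

/-- A cut vertex: its removal disconnects the graph. -/
def isCutVertex (G : SimpleGraph V) (v : V) : Prop :=
  ¬ (G.induce {u : V | u ≠ v}).Connected

/-- `B` is the vertex set of a `2`-connected subgraph of `G`:
it has at least `3` vertices and removing any one vertex leaves it connected. -/
def isTwoConnectedSet (G : SimpleGraph V) (B : Set V) : Prop :=
  3 ≤ B.ncard ∧ ∀ v ∈ B, (G.induce (B \ {v})).Connected

/-- A block graph: every maximal `2`-connected subgraph is a clique. -/
def isBlockGraph (G : SimpleGraph V) : Prop :=
  ∀ B : Set V, isTwoConnectedSet G B →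
    (∀ B' : Set V, isTwoConnectedSet G B' → B ⊆ B' → B = B') →
    G.IsClique B

/-- Complete multipartite graph: the vertices can be partitioned (via an
equivalence relation, whose classes are the parts) so that two vertices are
adjacent iff they lie in different parts. -/
def isCompleteMultipartite (G : SimpleGraph V) : Prop :=
  ∃ r : V → V → Prop, Equivalence r ∧ ∀ u v, G.Adj u v ↔ ¬ r u v

/-- The hypercube `Q_n`: binary strings of length `n`, two strings being
adjacent when they differ in exactly one coordinate. -/
def hypercube (n : ℕ) : SimpleGraph (Fin n → Bool) where
  Adj x y := {i : Fin n | x i ≠ y i}.ncard = 1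
  symm := by
    constructor
    intro x y h
    simpa [ne_comm] using h
  loopless := by
    constructor
    intro x
    simp

/-- The block graph `G_k`: a chain of `k+1` triangles `{vᵢ, uᵢ, vᵢ₊₁}`,
with the `v`-vertices `v₁, …, v_{k+2}` indexed by `Fin (k+2)` (left summand)
and the `u`-vertices `u₁, …, u_{k+1}` indexed by `Fin (k+1)` (right summand);
the edges are `vᵢvᵢ₊₁`, `uᵢvᵢ` and `uᵢvᵢ₊₁`. -/
def Gk (k : ℕ) : SimpleGraph (Fin (k + 2) ⊕ Fin (k + 1)) where
  Adj x y :=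
    match x, y with
    | Sum.inl a, Sum.inl b => a.val + 1 = b.val ∨ b.val + 1 = a.val
    | Sum.inl a, Sum.inr b => a.val = b.val ∨ a.val = b.val + 1
    | Sum.inr a, Sum.inl b => b.val = a.val ∨ b.val = a.val + 1
    | Sum.inr _, Sum.inr _ => False
  symm := by
    constructor
    rintro (a | a) (b | b) h
    · exact Or.symm h
    · exact h
    · exact h
    · exact h
  loopless := by
    constructor
    rintro (a | a) h
    · omega
    · exact h


section Helpers
variable {V : Type*} {G : SimpleGraph V}

lemma isPath_append_of {u v w : V} {p : G.Walk u v} {q : G.Walk v w} (hp : p.IsPath)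
    (hq : q.IsPath) (h : ∀ x, x ∈ p.support → x ∈ q.support → x = v) : (p.append q).IsPath := by
  rw [Walk.isPath_def, Walk.support_append]
  have hqc : q.support = v :: q.support.tail := q.support_eq_cons
  have hqn : q.support.Nodup := hq.support_nodup
  rw [hqc] at hqn
  refine List.Nodup.append hp.support_nodup (List.nodup_cons.mp hqn).2 ?_
  intro x hx hx'
  have := h x hx (by rw [hqc]; exact List.mem_cons_of_mem _ hx')
  subst this
  exact (List.nodup_cons.mp hqn).1 hx'

lemma tree_path_length (hT : G.IsTree) {u v : V} {p : G.Walk u v} (hp : p.IsPath) :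
    p.length = G.dist u v := by
  obtain ⟨q, hq, hql⟩ := hT.isConnected.exists_path_of_dist u v
  rw [← hql]; congr 1
  exact (hT.existsUnique_path u v).unique hp hq

/-- G1: distance additivity along a path in a tree. -/
lemma tree_dist_split (hT : G.IsTree) {u v c : V} {p : G.Walk u v} (hp : p.IsPath)
    [DecidableEq V] (hc : c ∈ p.support) : G.dist u c + G.dist c v = G.dist u v := by
  have h1 := hp.takeUntil hc
  have h2 := hp.dropUntil hc
  have := congr_arg Walk.length (p.take_spec hc)
  rw [Walk.length_append] at this
  rw [← tree_path_length hT h1, ← tree_path_length hT h2, ← tree_path_length hT hp, this]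

/-- adjacent vertices have different distances to any root, in a tree -/
lemma tree_adj_dist_ne (hT : G.IsTree) {a b r : V} (hab : G.Adj a b) :
    G.dist r a ≠ G.dist r b := by
  classical
  intro h
  obtain ⟨p, hp, hpl⟩ := hT.isConnected.exists_path_of_dist r a
  have hbs : b ∉ p.support := by
    intro hb
    have := tree_dist_split hT hp hb
    have hba : G.dist b a = 0 := by
      have h1 : G.dist r b ≤ G.dist r a := by omega
      omega
    exact hab.ne' ((hT.isConnected.dist_eq_zero_iff).mp hba)
  have hcons : (Walk.cons hab Walk.nil : G.Walk a b).IsPath := by simp [hab.ne]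
  have hcp : (p.append (Walk.cons hab Walk.nil)).IsPath := by
    refine isPath_append_of hp hcons ?_
    intro x hx hx'
    simp only [Walk.support_cons, Walk.support_nil, List.mem_cons, List.mem_singleton] at hx'
    rcases hx' with rfl | hx' 
    · rfl
    · simp at hx'; subst hx'; exact absurd hx hbs
  have := tree_path_length hT hcp
  rw [Walk.length_append] at this
  simp at this
  rw [hpl, h] at this
  omega

lemma dist_le_dist_add_one (hc : G.Connected) {r a y : V} (h : G.Adj y a) :
    G.dist r a ≤ G.dist r y + 1 := by
  have t := hc.dist_triangle (u := r) (v := y) (w := a)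
  rwa [dist_eq_one_iff_adj.mpr h] at t

lemma tree_dist_parity (hT : G.IsTree) (r a b : V) :
    (G.dist r a + G.dist a b) % 2 = G.dist r b % 2 := by
  obtain ⟨p, hp, hpl⟩ := hT.isConnected.exists_path_of_dist a b
  rw [← hpl]
  clear hpl hp
  induction p with
  | nil => simp
  | cons h q ih =>
    rename_i a' c d
    have h1 : G.dist r a' ≤ G.dist r c + 1 := dist_le_dist_add_one hT.isConnected h.symm
    have h2 : G.dist r c ≤ G.dist r a' + 1 := dist_le_dist_add_one hT.isConnected h
    have h3 : G.dist r a' ≠ G.dist r c := tree_adj_dist_ne hT h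
    rw [Walk.length_cons]
    omega

lemma tree_branch (hT : G.IsTree) [DecidableEq V] {u v w : V}
    (huvw : G.dist u v + G.dist v w = G.dist u w) (z : V) :
    G.dist u z = G.dist u v + G.dist v z ∨ G.dist w z = G.dist w v + G.dist v z := by
  obtain ⟨pu, hpu, hpul⟩ := hT.isConnected.exists_path_of_dist v u
  obtain ⟨pw, hpw, hpwl⟩ := hT.isConnected.exists_path_of_dist v w
  obtain ⟨g, hg, hgl⟩ := hT.isConnected.exists_path_of_dist v z
  have key : (∀ x, x ∈ pu.support → x ∈ g.support → x = v) ∨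
      (∀ x, x ∈ pw.support → x ∈ g.support → x = v) := by
    by_contra hcon
    push_neg at hcon
    obtain ⟨⟨c, hc1, hc2, hcv⟩, ⟨c', hc'1, hc'2, hc'v⟩⟩ := hcon
    have e1 : G.dist v c + G.dist c u = G.dist v u := tree_dist_split hT hpu hc1
    have e2 : G.dist v c' + G.dist c' w = G.dist v w := tree_dist_split hT hpw hc'1
    have e3 : G.dist v c + G.dist c z = G.dist v z := tree_dist_split hT hg hc2
    have e4 : G.dist v c' + G.dist c' z = G.dist v z := tree_dist_split hT hg hc'2
    have hα : 0 < G.dist v c := hT.isConnected.pos_dist_of_ne (Ne.symm hcv)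
    have hβ : 0 < G.dist v c' := hT.isConnected.pos_dist_of_ne (Ne.symm hc'v)
    have tri : G.dist u w ≤ G.dist u c + G.dist c c' + G.dist c' w := by
      have t1 := hT.isConnected.dist_triangle (u := u) (v := c) (w := w)
      have t2 := hT.isConnected.dist_triangle (u := c) (v := c') (w := w)
      omega
    have c1 : G.dist u c = G.dist c u := dist_comm
    have c2 : G.dist u v = G.dist v u := dist_comm
    have c3 : G.dist v w = G.dist v w := rfl
    -- locate c' relative to c on g
    have hsplit : c' ∈ (g.takeUntil c hc2).support ∨ c' ∈ (g.dropUntil c hc2).support := by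
      rw [← Walk.mem_support_append_iff, Walk.take_spec]
      exact hc'2
    rcases hsplit with hloc | hloc
    · have e5 : G.dist v c' + G.dist c' c = G.dist v c :=
        tree_dist_split hT (hg.takeUntil hc2) hloc
      have c4 : G.dist c c' = G.dist c' c := dist_comm
      omega
    · have e5 : G.dist c c' + G.dist c' z = G.dist c z :=
        tree_dist_split hT (hg.dropUntil hc2) hloc
      omega
  rcases key with hk | hk
  · left
    have hp : (pu.reverse.append g).IsPath := by
      refine isPath_append_of hpu.reverse hg ?_
      intro x hx hx'
      exact hk x (by rwa [Walk.support_reverse, List.mem_reverse] at hx) hx'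
    have := tree_path_length hT hp
    rw [Walk.length_append, Walk.length_reverse, hpul, hgl] at this
    rw [← this, dist_comm (u := u) (v := v)]
  · right
    have hp : (pw.reverse.append g).IsPath := by
      refine isPath_append_of hpw.reverse hg ?_
      intro x hx hx'
      exact hk x (by rwa [Walk.support_reverse, List.mem_reverse] at hx) hx'
    have := tree_path_length hT hp
    rw [Walk.length_append, Walk.length_reverse, hpwl, hgl] at this
    rw [← this, dist_comm (u := w) (v := v)]

lemma tree_unique_common_nbr (hT : G.IsTree) {a b p q : V} (hab : a ≠ b) (hpq : p ≠ q)
    (h1 : G.Adj a p) (h2 : G.Adj p b) (h3 : G.Adj a q) (h4 : G.Adj q b) : False := by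
  have w1 : (Walk.cons h1 (Walk.cons h2 Walk.nil) : G.Walk a b).IsPath := by
    simp [Walk.isPath_def, h1.ne, h2.ne, hab]
  have w2 : (Walk.cons h3 (Walk.cons h4 Walk.nil) : G.Walk a b).IsPath := by
    simp [Walk.isPath_def, h3.ne, h4.ne, hab]
  have := (hT.existsUnique_path a b).unique w1 w2
  have := congr_arg Walk.support this
  simp at this
  exact hpq this

lemma tree_no_two_paths3 (hT : G.IsTree) {a b p1 p2 q1 q2 : V}
    (e1 : G.Adj a p1) (e2 : G.Adj p1 p2) (e3 : G.Adj p2 b)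
    (f1 : G.Adj a q1) (f2 : G.Adj q1 q2) (f3 : G.Adj q2 b)
    (hap2 : a ≠ p2) (hab : a ≠ b) (hp1b : p1 ≠ b)
    (haq2 : a ≠ q2) (hq1b : q1 ≠ b) (hpq : p1 ≠ q1) : False := by
  have w1 : (Walk.cons e1 (Walk.cons e2 (Walk.cons e3 Walk.nil)) : G.Walk a b).IsPath := by
    simp [Walk.isPath_def, e1.ne, e2.ne, e3.ne, hap2, hab, hp1b]
  have w2 : (Walk.cons f1 (Walk.cons f2 (Walk.cons f3 Walk.nil)) : G.Walk a b).IsPath := by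
    simp [Walk.isPath_def, f1.ne, f2.ne, f3.ne, haq2, hab, hq1b]
  have := (hT.existsUnique_path a b).unique w1 w2
  have := congr_arg Walk.support this
  simp at this
  exact hpq this.1

lemma tree_no_path2_path3 (hT : G.IsTree) {a b p1 q1 q2 : V}
    (e1 : G.Adj a p1) (e2 : G.Adj p1 b)
    (f1 : G.Adj a q1) (f2 : G.Adj q1 q2) (f3 : G.Adj q2 b)
    (hab : a ≠ b) (haq2 : a ≠ q2) (hq1b : q1 ≠ b) : False := by
  have w1 : (Walk.cons e1 (Walk.cons e2 Walk.nil) : G.Walk a b).IsPath := by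
    simp [Walk.isPath_def, e1.ne, e2.ne, hab]
  have w2 : (Walk.cons f1 (Walk.cons f2 (Walk.cons f3 Walk.nil)) : G.Walk a b).IsPath := by
    simp [Walk.isPath_def, f1.ne, f2.ne, f3.ne, haq2, hab, hq1b]
  have := (hT.existsUnique_path a b).unique w1 w2
  have := congr_arg Walk.length this
  simp at this

lemma exists_mid_of_dist_two {u v : V} (h : G.dist u v = 2) :
    ∃ x, G.Adj u x ∧ G.Adj x v := by
  obtain ⟨p, hpl⟩ := exists_walk_of_dist_ne_zero (G := G) (u := u) (v := v) (by omega)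
  rw [h] at hpl
  rcases p with _ | ⟨h1, p⟩
  · simp at hpl
  · rcases p with _ | ⟨h2, p⟩
    · simp at hpl
    · rcases p with _ | ⟨h3, p⟩
      · exact ⟨_, h1, h2⟩
      · simp [Walk.length_cons] at hpl

lemma dist_le_two_of_mid {u v x : V} (h1 : G.Adj u x) (h2 : G.Adj x v) : G.dist u v ≤ 2 := by
  have := dist_le (Walk.cons h1 (Walk.cons h2 Walk.nil))
  simpa using this

lemma dist_le_three_of_mid {u v x y : V} (h1 : G.Adj u x) (h2 : G.Adj x y) (h3 : G.Adj y v) :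
    G.dist u v ≤ 3 := by
  have := dist_le (Walk.cons h1 (Walk.cons h2 (Walk.cons h3 Walk.nil)))
  simpa using this

lemma two_le_dist (h : G.Reachable u v) (hne : u ≠ v) (hna : ¬G.Adj u v) : 2 ≤ G.dist u v := by
  have h0 : G.dist u v ≠ 0 := by simp [hne, h]
  have h1 : G.dist u v ≠ 1 := fun hc => hna (dist_eq_one_iff_adj.mp hc)
  omega

section Prism
variable {T : SimpleGraph V}
local notation "cP" => compPrism T

@[simp] lemma cp_adj_ll {a b : V} : (cP).Adj (.inl a) (.inl b) ↔ T.Adj a b := Iff.rfl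
@[simp] lemma cp_adj_rr {a b : V} : (cP).Adj (.inr a) (.inr b) ↔ a ≠ b ∧ ¬T.Adj a b := by
  show Tᶜ.Adj a b ↔ _
  rw [compl_adj]
@[simp] lemma cp_adj_lr {a b : V} : (cP).Adj (.inl a) (.inr b) ↔ a = b := Iff.rfl
@[simp] lemma cp_adj_rl {a b : V} : (cP).Adj (.inr a) (.inl b) ↔ a = b := Iff.rfl

variable (hc : T.Connected)
include hc

lemma cp_reach : ∀ x y : V ⊕ V, (cP).Reachable x y := by
  have hL : ∀ a b : V, (cP).Reachable (.inl a) (.inl b) := by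
    intro a b
    exact Reachable.map (⟨Sum.inl, fun h => h⟩ : T →g cP) (hc a b)
  have hM : ∀ a : V, (cP).Reachable (.inl a) (.inr a) := fun a =>
    (Adj.reachable (by simp))
  rintro (a | a) (b | b)
  · exact hL a b
  · exact (hL a b).trans (hM b)
  · exact ((hL b a).trans (hM a)).symm
  · exact ((hM a).symm.trans (hL a b)).trans (hM b)

lemma cp_connected : (cP).Connected := by
  have : Nonempty V := hc.nonempty
  constructor
  exact cp_reach hc

lemma pd_lr_self (u : V) : (cP).dist (.inl u) (.inr u) = 1 := by
  rw [dist_eq_one_iff_adj]; simp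

lemma pd_lr {u w : V} (h : u ≠ w) : (cP).dist (.inl u) (.inr w) = 2 := by
  refine le_antisymm ?_ (two_le_dist (cp_reach hc _ _) (by simp) (by simp [h]))
  by_cases ha : T.Adj u w
  · exact dist_le_two_of_mid (x := Sum.inl w) ha (by simp)
  · exact dist_le_two_of_mid (x := Sum.inr u) (by simp) (by simp [h, ha])

lemma pd_ll_adj {u w : V} (h : T.Adj u w) : (cP).dist (.inl u) (.inl w) = 1 := by
  rw [dist_eq_one_iff_adj]; simpa

lemma pd_ll_ge2 {u w : V} (h : u ≠ w) (hna : ¬T.Adj u w) :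
    2 ≤ (cP).dist (.inl u) (.inl w) :=
  two_le_dist (cp_reach hc _ _) (by simp [h]) (by simpa)

lemma pd_ll_le3 {u w : V} (h : u ≠ w) : (cP).dist (.inl u) (.inl w) ≤ 3 := by
  by_cases ha : T.Adj u w
  · rw [pd_ll_adj hc ha]; omega
  · exact dist_le_three_of_mid (x := Sum.inr u) (y := Sum.inr w) (by simp) (by simp [h, ha])
      (by simp)

lemma pd_ll_eq2 {u w : V} (h : T.dist u w = 2) : (cP).dist (.inl u) (.inl w) = 2 := by
  obtain ⟨x, hx1, hx2⟩ := exists_mid_of_dist_two (G := T) h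
  have hne : u ≠ w := by rintro rfl; rw [dist_self] at h; omega
  have hna : ¬T.Adj u w := fun hc' => by rw [dist_eq_one_iff_adj.mpr hc'] at h; omega
  exact le_antisymm (dist_le_two_of_mid (x := Sum.inl x) hx1 hx2) (pd_ll_ge2 hc hne hna)

lemma pd_ll_eq3 {u w : V} (h : 3 ≤ T.dist u w) : (cP).dist (.inl u) (.inl w) = 3 := by
  have hne : u ≠ w := by rintro rfl; rw [dist_self] at h; omega
  have hna : ¬T.Adj u w := fun hc' => by rw [dist_eq_one_iff_adj.mpr hc'] at h; omega
  refine le_antisymm (pd_ll_le3 hc hne) ?_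
  have h2 : (cP).dist (.inl u) (.inl w) ≠ 2 := by
    intro hd
    obtain ⟨x, hx1, hx2⟩ := exists_mid_of_dist_two (G := cP) hd
    rcases x with x | x
    · have : T.dist u w ≤ 2 := dist_le_two_of_mid (by simpa using hx1) (by simpa using hx2)
      omega
    · simp at hx1 hx2
      exact hne (hx1.trans hx2)
  have := pd_ll_ge2 hc hne hna
  omega

lemma pd_rr_nonadj {u w : V} (h : u ≠ w) (hna : ¬T.Adj u w) :
    (cP).dist (.inr u) (.inr w) = 1 := by
  rw [dist_eq_one_iff_adj]; simp [h, hna]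

lemma pd_rr_ge2 {u w : V} (h : T.Adj u w) : 2 ≤ (cP).dist (.inr u) (.inr w) :=
  two_le_dist (cp_reach hc _ _) (by simp [h.ne]) (by simp [h])

lemma pd_rr_le3 {u w : V} (h : u ≠ w) : (cP).dist (.inr u) (.inr w) ≤ 3 := by
  by_cases ha : T.Adj u w
  · exact dist_le_three_of_mid (x := Sum.inl u) (y := Sum.inl w) (by simp) (by simpa) (by simp)
  · rw [pd_rr_nonadj hc h ha]; omega

lemma pd_rr_cnn {u w : V} (h : T.Adj u w)
    (hx : ∃ x, x ≠ u ∧ x ≠ w ∧ ¬T.Adj x u ∧ ¬T.Adj x w) :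
    (cP).dist (.inr u) (.inr w) = 2 := by
  obtain ⟨x, h1, h2, h3, h4⟩ := hx
  refine le_antisymm (dist_le_two_of_mid (x := Sum.inr x) ?_ ?_) (pd_rr_ge2 hc h)
  · simp only [cp_adj_rr]
    exact ⟨Ne.symm h1, fun hh => h3 (hh.symm)⟩
  · simp [h2, h4]

lemma pd_rr_nocnn {u w : V} (h : T.Adj u w)
    (hx : ¬∃ x, x ≠ u ∧ x ≠ w ∧ ¬T.Adj x u ∧ ¬T.Adj x w) :
    (cP).dist (.inr u) (.inr w) = 3 := by
  refine le_antisymm (pd_rr_le3 hc h.ne) ?_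
  have h2 : (cP).dist (.inr u) (.inr w) ≠ 2 := by
    intro hd
    obtain ⟨x, hx1, hx2⟩ := exists_mid_of_dist_two (G := cP) hd
    rcases x with x | x
    · simp at hx1 hx2
      exact h.ne (hx1.trans hx2)
    · simp at hx1 hx2
      exact hx ⟨x, Ne.symm hx1.1, hx2.1, fun hh => hx1.2 hh.symm, hx2.2⟩
  have := pd_rr_ge2 hc h
  omega

end Prism

section Main
variable {T : SimpleGraph V} [Fintype V]
local notation "cP" => compPrism T

lemma dist_le_graphDiam (hc : T.Connected) (u v : V) : T.dist u v ≤ graphDiam T := by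
  apply le_csSup
  · refine ⟨Fintype.card V, ?_⟩
    rintro m ⟨a, b, rfl⟩
    obtain ⟨p, hp, hpl⟩ := hc.exists_path_of_dist a b
    rw [← hpl]
    exact hp.length_lt.le
  · exact ⟨u, v, rfl⟩

lemma exists_dist_eq_graphDiam (hc : T.Connected) : ∃ u v : V, T.dist u v = graphDiam T := by
  have : Nonempty V := hc.nonempty
  have h := Nat.sSup_mem (s := {n : ℕ | ∃ u v : V, T.dist u v = n})
    ⟨0, Classical.arbitrary V, Classical.arbitrary V, SimpleGraph.dist_self⟩
    ⟨Fintype.card V, by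
      rintro m ⟨a, b, rfl⟩
      obtain ⟨p, hp, hpl⟩ := hc.exists_path_of_dist a b
      rw [← hpl]
      exact hp.length_lt.le⟩
  exact h

lemma graphDiam_eq_of {d : ℕ} (hex : ∃ u v : V, T.dist u v = d)
    (hle : ∀ u v : V, T.dist u v ≤ d) : graphDiam T = d := by
  refine IsGreatest.csSup_eq ⟨hex, ?_⟩
  rintro m ⟨a, b, rfl⟩
  exact hle a b

def isGPS {W : Type*} (G : SimpleGraph W) (S : Set W) : Prop :=
  ∀ u ∈ S, ∀ v ∈ S, ∀ w ∈ S, u ≠ v → v ≠ w → u ≠ w →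
    ¬ (G.Reachable u w ∧ G.dist u v + G.dist v w = G.dist u w)

lemma upper_bound (hT : T.IsTree) (hn : 2 ≤ Fintype.card V) {S : Set (V ⊕ V)}
    (hS : isGPS (cP) S) :
    S.ncard ≤ Fintype.card V + 1 ∧ (graphDiam T ≠ 4 → S.ncard ≤ Fintype.card V) := by
  classical
  have hc := hT.isConnected
  set A : Set V := Sum.inl ⁻¹' S with hA
  set B : Set V := Sum.inr ⁻¹' S with hB
  have hSdecomp : S = Sum.inl '' A ∪ Sum.inr '' B := by
    ext x
    rcases x with a | a <;> simp [hA, hB]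
  have hcard : S.ncard = A.ncard + B.ncard := by
    rw [hSdecomp, Set.ncard_union_eq ?_ (Set.toFinite _) (Set.toFinite _),
      Set.ncard_image_of_injective _ Sum.inl_injective,
      Set.ncard_image_of_injective _ Sum.inr_injective]
    rw [Set.disjoint_left]
    rintro _ ⟨a, _, rfl⟩ ⟨b, _, hb⟩
    simp at hb
  have hABsub : (A ∩ B).Subsingleton := by
    rintro v ⟨hv1, hv2⟩ v' ⟨hv'1, hv'2⟩
    by_contra hne
    by_cases hadj : T.Adj v v'
    · exact hS (Sum.inl v) hv1 (Sum.inl v') hv'1 (Sum.inr v') hv'2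
        (by simp [hne]) (by simp) (by simp)
        ⟨cp_reach hc _ _, by
          rw [pd_ll_adj hc hadj, pd_lr_self hc, pd_lr hc hne]⟩
    · exact hS (Sum.inl v) hv1 (Sum.inr v) hv2 (Sum.inr v') hv'2
        (by simp) (by simp [hne]) (by simp)
        ⟨cp_reach hc _ _, by
          rw [pd_lr_self hc, pd_rr_nonadj hc hne hadj, pd_lr hc hne]⟩
  have hABle1 : (A ∩ B).ncard ≤ 1 := by
    rcases Set.Subsingleton.eq_empty_or_singleton hABsub with h | ⟨x, h⟩
    · simp [h]
    · simp [h]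
  have hkey : S.ncard = (A ∪ B).ncard + (A ∩ B).ncard := by
    rw [hcard, Set.ncard_union_add_ncard_inter]
  have hU : (A ∪ B).ncard ≤ Fintype.card V := by
    have := Set.ncard_le_ncard (Set.subset_univ (A ∪ B)) (Set.toFinite _)
    rwa [Set.ncard_univ, Nat.card_eq_fintype_card] at this
  constructor
  · omega
  intro hdiam
  rcases Set.eq_empty_or_nonempty (A ∩ B) with hAB | ⟨v, hv1, hv2⟩
  · rw [hkey, hAB]
    simpa using hU
  -- doubled vertex v
  have hvA : Sum.inl v ∈ S := hv1
  have hvB : Sum.inr v ∈ S := hv2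
  -- key structural facts
  have f5 : ∀ w ∈ A, w ≠ v → ¬T.Adj v w := by
    intro w hw hwv hadj
    exact hS (Sum.inr v) hvB (Sum.inl v) hvA (Sum.inl w) hw
      (by simp) (by simp [Ne.symm hwv]) (by simp)
      ⟨cp_reach hc _ _, by
        rw [SimpleGraph.dist_comm (G := cP) (u := Sum.inr v) (v := Sum.inl v), pd_lr_self hc,
          pd_ll_adj hc hadj, SimpleGraph.dist_comm (G := cP) (u := Sum.inr v) (v := Sum.inl w),
          pd_lr hc hwv]⟩
  have f3 : ∀ w ∈ A, w ≠ v → T.dist v w = 2 := by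
    intro w hw hwv
    have hna : ¬T.Adj v w := f5 w hw hwv
    have h1 : T.dist v w ≠ 1 := fun h => hna (dist_eq_one_iff_adj.mp h)
    have h0 : T.dist v w ≠ 0 := by
      simp [hc.dist_eq_zero_iff, Ne.symm hwv]
    by_contra hne2
    have h3 : 3 ≤ T.dist v w := by omega
    exact hS (Sum.inl v) hvA (Sum.inr v) hvB (Sum.inl w) hw
      (by simp) (by simp) (by simp [Ne.symm hwv])
      ⟨cp_reach hc _ _, by
        rw [pd_lr_self hc, SimpleGraph.dist_comm (G := cP) (u := Sum.inr v) (v := Sum.inl w),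
          pd_lr hc hwv, pd_ll_eq3 hc h3]⟩
  have f6 : ∀ w ∈ B, w ≠ v → T.Adj v w := by
    intro w hw hwv
    by_contra hna
    exact hS (Sum.inl v) hvA (Sum.inr v) hvB (Sum.inr w) hw
      (by simp) (by simp [Ne.symm hwv]) (by simp)
      ⟨cp_reach hc _ _, by
        rw [pd_lr_self hc, pd_rr_nonadj hc (Ne.symm hwv) hna, pd_lr hc (Ne.symm hwv)]⟩
  have f4 : ∀ w ∈ B, w ≠ v → ∃ x, x ≠ v ∧ x ≠ w ∧ ¬T.Adj x v ∧ ¬T.Adj x w := by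
    intro w hw hwv
    by_contra hno
    exact hS (Sum.inr v) hvB (Sum.inl v) hvA (Sum.inr w) hw
      (by simp) (by simp) (by simp [Ne.symm hwv])
      ⟨cp_reach hc _ _, by
        rw [SimpleGraph.dist_comm (G := cP) (u := Sum.inr v) (v := Sum.inl v), pd_lr_self hc,
          pd_lr hc (Ne.symm hwv), pd_rr_nocnn hc (f6 w hw hwv) hno]⟩
  -- suppose A ∪ B = univ, derive contradiction
  by_contra hcon
  push_neg at hcon
  have hfull : A ∪ B = Set.univ := by
    by_contra hne
    obtain ⟨u0, hu0⟩ : ∃ u0, u0 ∉ A ∪ B := by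
      by_contra hh
      push_neg at hh
      exact hne (Set.eq_univ_of_forall hh)
    have : (A ∪ B).ncard ≤ Fintype.card V - 1 := by
      have hsub : A ∪ B ⊆ Set.univ \ {u0} := by
        intro x hx
        refine ⟨trivial, ?_⟩
        simp only [Set.mem_singleton_iff]
        rintro rfl
        exact hu0 hx
      have h2 := Set.ncard_le_ncard hsub (Set.toFinite _)
      have h3 : (Set.univ \ {u0} : Set V).ncard = Fintype.card V - 1 := by
        rw [Set.ncard_diff_singleton_of_mem (Set.mem_univ u0), Set.ncard_univ,
          Nat.card_eq_fintype_card]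
      omega
    omega
  have hball : ∀ u : V, u ≠ v → T.Adj v u ∨ T.dist v u = 2 := by
    intro u huv
    rcases (Set.eq_univ_iff_forall.mp hfull u) with h | h
    · exact Or.inr (f3 u h huv)
    · exact Or.inl (f6 u h huv)
  have hNB : ∀ u : V, T.Adj v u → u ∈ B := by
    intro u hadj
    rcases (Set.eq_univ_iff_forall.mp hfull u) with h | h
    · exact absurd hadj (f5 u h hadj.ne')
    · exact h
  have hdist2le : ∀ a : V, T.dist v a ≤ 2 := by
    intro a
    by_cases hav : a = v
    · subst hav; simp [SimpleGraph.dist_self]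
    · rcases hball a hav with h | h
      · rw [dist_eq_one_iff_adj.mpr h]; omega
      · omega
  -- v has a neighbor
  obtain ⟨p0, hp0⟩ : ∃ p0, T.Adj v p0 := by
    obtain ⟨u, hu⟩ := Fintype.exists_ne_of_one_lt_card (by omega) v
    rcases hball u (hu) with h | h
    · exact ⟨u, h⟩
    · obtain ⟨x, hx1, hx2⟩ := exists_mid_of_dist_two (G := T) h
      exact ⟨x, hx1⟩
  by_cases hS2 : ∃ x, T.dist v x = 2
  · obtain ⟨x0, hx0⟩ := hS2
    obtain ⟨p, hp1, hp2⟩ := exists_mid_of_dist_two (G := T) hx0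
    have hvx0ne : v ≠ x0 := by
      rintro rfl; rw [SimpleGraph.dist_self] at hx0; omega
    have hvx0na : ¬T.Adj v x0 := fun h => by
      rw [dist_eq_one_iff_adj.mpr h] at hx0; omega
    have hpB : p ∈ B := hNB p hp1
    obtain ⟨z, hz1, hz2, hz3, hz4⟩ := f4 p hpB hp1.ne'
    have hzS2 : T.dist v z = 2 := by
      rcases hball z (hz1) with h | h
      · exact absurd h.symm hz3
      · exact h
    obtain ⟨q, hq1, hq2⟩ := exists_mid_of_dist_two (G := T) hzS2
    have hqp : q ≠ p := by
      rintro rfl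
      exact hz4 hq2.symm
    have hx0z : x0 ≠ z := by
      rintro rfl
      exact hz4 hp2.symm
    have hvzna : ¬T.Adj v z := fun h => by
      rw [dist_eq_one_iff_adj.mpr h] at hzS2; omega
    have hdxz4 : T.dist x0 z ≤ 4 := by
      have t := hc.dist_triangle (u := x0) (v := v) (w := z)
      rw [SimpleGraph.dist_comm (u := x0) (v := v)] at t
      omega
    have hdxzne4 : T.dist x0 z ≠ 4 := by
      intro h4
      apply hdiam
      apply graphDiam_eq_of ⟨x0, z, h4⟩
      intro a b
      have t := hc.dist_triangle (u := a) (v := v) (w := b)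
      have t1 : T.dist a v ≤ 2 := by rw [SimpleGraph.dist_comm]; exact hdist2le a
      have t2 := hdist2le b
      omega
    have hpar : T.dist x0 z % 2 = 0 := by
      have := tree_dist_parity hT x0 v z
      rw [SimpleGraph.dist_comm (u := x0) (v := v)] at this
      rw [hx0, hzS2] at this
      omega
    have hpos : 0 < T.dist x0 z := hc.pos_dist_of_ne hx0z
    have hdxz2 : T.dist x0 z = 2 := by omega
    obtain ⟨m, hm1, hm2⟩ := exists_mid_of_dist_two (G := T) hdxz2
    have hmv : m ≠ v := by
      rintro rfl
      exact hvx0na hm1.symm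
    have hmp : m ≠ p := by
      rintro rfl
      exact hz4 hm2.symm
    by_cases hmq : m = q
    · subst hmq
      exact tree_unique_common_nbr hT hvx0ne hqp hq1 hm1.symm hp1 hp2
    · have hvzne : v ≠ z := fun h => by rw [← h, SimpleGraph.dist_self] at hzS2; omega
      exact tree_no_two_paths3 hT hp1 hp2 hm1 hq1 hq2 hm2.symm
        hvx0ne (Ne.symm hmv) (Ne.symm hmp) hvzne (fun h => hmq h.symm) (Ne.symm hqp)
  · push_neg at hS2
    obtain ⟨z, hz1, hz2, hz3, hz4⟩ := f4 p0 (hNB p0 hp0) hp0.ne'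
    rcases hball z hz1 with h | h
    · exact hz3 h.symm
    · exact absurd h (hS2 z)

lemma tree_no_triangle (hT : T.IsTree) {a b c : V} (h1 : T.Adj a b) (h2 : T.Adj b c)
    (h3 : T.Adj a c) : False := by
  have w1 : (Walk.cons h3 Walk.nil : T.Walk a c).IsPath := by
    simp [Walk.isPath_def, h3.ne]
  have w2 : (Walk.cons h1 (Walk.cons h2 Walk.nil) : T.Walk a c).IsPath := by
    simp [Walk.isPath_def, h1.ne, h2.ne, h3.ne]
  have := (hT.existsUnique_path a c).unique w1 w2
  have := congr_arg Walk.length this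
  simp at this

lemma pd_lr_le2 (hc : T.Connected) (a b : V) : (cP).dist (.inl a) (.inr b) ≤ 2 := by
  by_cases h : a = b
  · subst h; rw [pd_lr_self hc]; omega
  · rw [pd_lr hc h]

lemma pd_rl (hc : T.Connected) {u w : V} (h : u ≠ w) : (cP).dist (.inr u) (.inl w) = 2 := by
  rw [SimpleGraph.dist_comm]; exact pd_lr hc (Ne.symm h)

lemma pd_rl_self (hc : T.Connected) (u : V) : (cP).dist (.inr u) (.inl u) = 1 := by
  rw [SimpleGraph.dist_comm]; exact pd_lr_self hc u

lemma lowerN (hT : T.IsTree) :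
    ∃ S : Set (V ⊕ V), isGPS (cP) S ∧ S.ncard = Fintype.card V := by
  classical
  have hc := hT.isConnected
  have hne : Nonempty V := hc.nonempty
  obtain ⟨r⟩ := hne
  set A : Set V := {x | T.dist r x % 2 = 0} with hAdef
  have hind : ∀ x ∈ A, ∀ y ∈ A, ¬T.Adj x y := by
    intro x hx y hy hadj
    have hp := tree_dist_parity hT r x y
    rw [dist_eq_one_iff_adj.mpr hadj] at hp
    simp only [hAdef, Set.mem_setOf_eq] at hx hy
    omega
  have hindc : ∀ x ∈ Aᶜ, ∀ y ∈ Aᶜ, ¬T.Adj x y := by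
    intro x hx y hy hadj
    have hp := tree_dist_parity hT r x y
    rw [dist_eq_one_iff_adj.mpr hadj] at hp
    simp only [hAdef, Set.mem_compl_iff, Set.mem_setOf_eq] at hx hy
    omega
  have hdisj : ∀ x ∈ A, ∀ y ∈ Aᶜ, x ≠ y := by
    rintro x hx y hy rfl
    exact hy hx
  refine ⟨Sum.inl '' A ∪ Sum.inr '' Aᶜ, ?_, ?_⟩
  · rintro u hu v hv w hw huv hvw huw ⟨hreach, hsum⟩
    simp only [Set.mem_union, Set.mem_image] at hu hv hw
    rcases hu with ⟨a, ha, rfl⟩ | ⟨a, ha, rfl⟩ <;>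
      rcases hv with ⟨b, hb, rfl⟩ | ⟨b, hb, rfl⟩ <;>
        rcases hw with ⟨c, hcc, rfl⟩ | ⟨c, hcc, rfl⟩
    · -- lll
      have hab : a ≠ b := fun h => huv (by rw [h])
      have hbc : b ≠ c := fun h => hvw (by rw [h])
      have hac : a ≠ c := fun h => huw (by rw [h])
      have d1 := pd_ll_ge2 hc hab (hind a ha b hb)
      have d2 := pd_ll_ge2 hc hbc (hind b hb c hcc)
      have d3 := pd_ll_le3 hc hac
      omega
    · -- llr
      have hab : a ≠ b := fun h => huv (by rw [h])
      have d1 := pd_ll_ge2 hc hab (hind a ha b hb)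
      have d2 := pd_lr hc (hdisj b hb c hcc)
      have d3 := pd_lr hc (hdisj a ha c hcc)
      omega
    · -- lrl
      have hac : a ≠ c := fun h => huw (by rw [h])
      have d1 := pd_lr hc (hdisj a ha b hb)
      have d2 := pd_rl hc (Ne.symm (hdisj c hcc b hb))
      have d3 := pd_ll_le3 hc hac
      omega
    · -- lrr
      have hbc : b ≠ c := fun h => hvw (by rw [h])
      have d1 := pd_lr hc (hdisj a ha b hb)
      have d2 := pd_rr_nonadj hc hbc (hindc b hb c hcc)
      have d3 := pd_lr hc (hdisj a ha c hcc)
      omega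
    · -- rll
      have hbc : b ≠ c := fun h => hvw (by rw [h])
      have d1 := pd_rl hc (Ne.symm (hdisj b hb a ha))
      have d2 := pd_ll_ge2 hc hbc (hind b hb c hcc)
      have d3 := pd_rl hc (Ne.symm (hdisj c hcc a ha))
      omega
    · -- rlr
      have d1 := pd_rl hc (Ne.symm (hdisj b hb a ha))
      have d2 := pd_lr hc (hdisj b hb c hcc)
      have d3 : (cP).dist (.inr a) (.inr c) ≤ 1 := by
        by_cases h : a = c
        · subst h; simp [SimpleGraph.dist_self]
        · rw [pd_rr_nonadj hc h (hindc a ha c hcc)]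
      omega
    · -- rrl
      have hab : a ≠ b := fun h => huv (by rw [h])
      have d1 := pd_rr_nonadj hc hab (hindc a ha b hb)
      have d2 := pd_rl hc (Ne.symm (hdisj c hcc b hb))
      have d3 := pd_rl hc (Ne.symm (hdisj c hcc a ha))
      omega
    · -- rrr
      have hab : a ≠ b := fun h => huv (by rw [h])
      have hbc : b ≠ c := fun h => hvw (by rw [h])
      have hac : a ≠ c := fun h => huw (by rw [h])
      have d1 := pd_rr_nonadj hc hab (hindc a ha b hb)
      have d2 := pd_rr_nonadj hc hbc (hindc b hb c hcc)
      have d3 := pd_rr_nonadj hc hac (hindc a ha c hcc)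
      omega
  · rw [Set.ncard_union_eq ?_ (Set.toFinite _) (Set.toFinite _),
      Set.ncard_image_of_injective _ Sum.inl_injective,
      Set.ncard_image_of_injective _ Sum.inr_injective, Set.ncard_add_ncard_compl,
      Nat.card_eq_fintype_card]
    rw [Set.disjoint_left]
    rintro _ ⟨a, _, rfl⟩ ⟨b, _, hb⟩
    simp at hb

lemma pd_rl_le2 (hc : T.Connected) (a b : V) : (cP).dist (.inr a) (.inl b) ≤ 2 := by
  rw [SimpleGraph.dist_comm]; exact pd_lr_le2 hc b a

lemma lower4 (hT : T.IsTree) (hn : 2 ≤ Fintype.card V) (hdiam : graphDiam T = 4) :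
    ∃ S : Set (V ⊕ V), isGPS (cP) S ∧ S.ncard = Fintype.card V + 1 := by
  classical
  have hc := hT.isConnected
  obtain ⟨u, w, huw⟩ : ∃ u w : V, T.dist u w = 4 := by
    obtain ⟨u, w, h⟩ := exists_dist_eq_graphDiam hc
    exact ⟨u, w, by rw [h, hdiam]⟩
  have hle4 : ∀ a b : V, T.dist a b ≤ 4 := by
    intro a b
    rw [← hdiam]
    exact dist_le_graphDiam hc a b
  obtain ⟨p, hp, hpl⟩ := hc.exists_path_of_dist u w
  rw [huw] at hpl
  set x1 := p.getVert 1 with hx1def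
  set v := p.getVert 2 with hvdef
  set x3 := p.getVert 3 with hx3def
  have e1 : T.Adj u x1 := by
    have := p.adj_getVert_succ (i := 0) (by omega)
    rwa [p.getVert_zero] at this
  have e2 : T.Adj x1 v := p.adj_getVert_succ (i := 1) (by omega)
  have e3 : T.Adj v x3 := p.adj_getVert_succ (i := 2) (by omega)
  have e4 : T.Adj x3 w := by
    have := p.adj_getVert_succ (i := 3) (by omega)
    have h4 : p.getVert 4 = w := by
      have := p.getVert_length
      rwa [hpl] at this
    rwa [h4] at this
  have duv : T.dist u v = 2 ∧ T.dist v w = 2 := by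
    have h1 : T.dist u v ≤ 2 := dist_le_two_of_mid e1 e2
    have h2 : T.dist v w ≤ 2 := dist_le_two_of_mid e3 e4
    have h3 := hc.dist_triangle (u := u) (v := v) (w := w)
    omega
  have hecc : ∀ z, T.dist v z ≤ 2 := by
    intro z
    have hb := tree_branch hT (u := u) (v := v) (w := w) (by omega) z
    have h1 := hle4 u z
    have h2 := hle4 w z
    have h3 : T.dist w v = 2 := by rw [SimpleGraph.dist_comm]; exact duv.2
    omega
  have hvu_na : ¬T.Adj u v := fun h => by
    have := dist_eq_one_iff_adj.mpr h; omega
  have hvw_na : ¬T.Adj v w := fun h => by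
    have := dist_eq_one_iff_adj.mpr h; omega
  have hvu_ne : u ≠ v := fun h => by
    rw [h, SimpleGraph.dist_self] at duv; omega
  have hvw_ne : v ≠ w := fun h => by
    rw [h, SimpleGraph.dist_self] at duv; omega
  have hx13 : x1 ≠ x3 := by
    intro h
    have := dist_le_two_of_mid (x := x1) e1 (h ▸ e4)
    omega
  have hcnn : ∀ x, T.Adj v x → ∃ z, z ≠ v ∧ z ≠ x ∧ ¬T.Adj z v ∧ ¬T.Adj z x := by
    intro x hx
    by_cases hxx : x = x1
    · refine ⟨w, Ne.symm hvw_ne, ?_, fun h => hvw_na h.symm, ?_⟩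
      · rintro rfl
        exact hvw_na hx
      · intro hwx
        rw [hxx] at hwx hx
        exact tree_unique_common_nbr hT (a := w) (b := v) (Ne.symm hvw_ne) hx13
          hwx e2 e4.symm e3.symm
    · refine ⟨u, hvu_ne, ?_, hvu_na, ?_⟩
      · rintro rfl
        exact hvu_na hx.symm
      · intro hux
        exact tree_unique_common_nbr hT (a := u) (b := v) hvu_ne (fun h => hxx h)
          hux hx.symm e1 e2
  set SS : Set V := {x | T.dist v x = 2} with hSSdef
  set NN : Set V := {x | T.Adj v x} with hNNdef
  set A : Set V := insert v SS with hAdef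
  set B : Set V := insert v NN with hBdef
  have haA : ∀ a ∈ A, a ≠ v → T.dist v a = 2 := by
    intro a ha hav
    rcases Set.mem_insert_iff.mp ha with h | h
    · exact absurd h hav
    · exact h
  have hbB : ∀ b ∈ B, b ≠ v → T.Adj v b := by
    intro b hb hbv
    rcases Set.mem_insert_iff.mp hb with h | h
    · exact absurd h hbv
    · exact h
  have hAnadj : ∀ a ∈ A, ∀ a' ∈ A, ¬T.Adj a a' := by
    intro a ha a' ha' hadj
    by_cases hav : a = v
    · subst hav
      by_cases ha'v : a' = v
      · subst ha'v; exact T.loopless.irrefl _ hadj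
      · have := haA a' ha' ha'v
        rw [dist_eq_one_iff_adj.mpr hadj] at this
        omega
    · by_cases ha'v : a' = v
      · subst ha'v
        have := haA a ha hav
        rw [dist_eq_one_iff_adj.mpr hadj.symm] at this
        omega
      · have h1 := haA a ha hav
        have h2 := haA a' ha' ha'v
        have hp := tree_dist_parity hT v a a'
        rw [dist_eq_one_iff_adj.mpr hadj, h1, h2] at hp
        omega
  have hABv : ∀ a ∈ A, ∀ b ∈ B, a ≠ v → a ≠ b := by
    intro a ha b hb hav hab
    subst hab
    by_cases hbv : a = v
    · exact hav hbv
    · have h1 := haA a ha hav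
      have h2 := hbB a hb hbv
      rw [dist_eq_one_iff_adj.mpr h2] at h1
      omega
  -- prism distance facts
  have dll2 : ∀ a ∈ A, a ≠ v → (cP).dist (.inl v) (.inl a) = 2 := by
    intro a ha hav
    exact pd_ll_eq2 hc (haA a ha hav)
  have dll2' : ∀ a ∈ A, a ≠ v → (cP).dist (.inl a) (.inl v) = 2 := by
    intro a ha hav
    rw [SimpleGraph.dist_comm]; exact dll2 a ha hav
  have dllge2 : ∀ a ∈ A, ∀ a' ∈ A, a ≠ a' → 2 ≤ (cP).dist (.inl a) (.inl a') := by
    intro a ha a' ha' hne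
    exact pd_ll_ge2 hc hne (hAnadj a ha a' ha')
  have drr2 : ∀ b ∈ B, b ≠ v → (cP).dist (.inr v) (.inr b) = 2 := by
    intro b hb hbv
    exact pd_rr_cnn hc (hbB b hb hbv) (hcnn b (hbB b hb hbv))
  have drr2' : ∀ b ∈ B, b ≠ v → (cP).dist (.inr b) (.inr v) = 2 := by
    intro b hb hbv
    rw [SimpleGraph.dist_comm]; exact drr2 b hb hbv
  have drr1 : ∀ b ∈ B, ∀ b' ∈ B, b ≠ v → b' ≠ v → b ≠ b' →
      (cP).dist (.inr b) (.inr b') = 1 := by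
    intro b hb b' hb' hbv hb'v hne
    refine pd_rr_nonadj hc hne ?_
    intro hadj
    exact tree_no_triangle hT (hbB b hb hbv) hadj (hbB b' hb' hb'v)
  have drrle2 : ∀ b ∈ B, ∀ b' ∈ B, b ≠ b' → (cP).dist (.inr b) (.inr b') ≤ 2 := by
    intro b hb b' hb' hne
    by_cases hbv : b = v
    · subst hbv; rw [drr2 b' hb' (Ne.symm hne)]
    · by_cases hb'v : b' = v
      · subst hb'v; rw [drr2' b hb hbv]
      · rw [drr1 b hb b' hb' hbv hb'v hne]; omega
  have drrge1 : ∀ (b b' : V), b ≠ b' → 1 ≤ (cP).dist (.inr b) (.inr b') := by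
    intro b b' hne
    exact (cp_reach hc _ _).pos_dist_of_ne (by simp [hne])
  refine ⟨Sum.inl '' A ∪ Sum.inr '' B, ?_, ?_⟩
  · rintro X hX Y hY Z hZ hXY hYZ hXZ ⟨hreach, hsum⟩
    simp only [Set.mem_union, Set.mem_image] at hX hY hZ
    rcases hX with ⟨a, ha, rfl⟩ | ⟨a, ha, rfl⟩ <;>
      rcases hY with ⟨b, hb, rfl⟩ | ⟨b, hb, rfl⟩ <;>
        rcases hZ with ⟨c, hcc, rfl⟩ | ⟨c, hcc, rfl⟩
    · -- lll
      have hab : a ≠ b := fun h => hXY (by rw [h])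
      have hbc : b ≠ c := fun h => hYZ (by rw [h])
      have hac : a ≠ c := fun h => hXZ (by rw [h])
      have d1 := dllge2 a ha b hb hab
      have d2 := dllge2 b hb c hcc hbc
      have d3 := pd_ll_le3 hc hac
      omega
    · -- llr
      have hab : a ≠ b := fun h => hXY (by rw [h])
      by_cases hbc : b = c
      · have hbv : b = v := by
          by_contra hbv
          exact (hABv b hb c hcc hbv) hbc
        subst hbc
        have hav : a ≠ v := by rw [← hbv]; exact hab
        have d1 : (cP).dist (.inl a) (.inl b) = 2 := by rw [hbv]; exact dll2' a ha hav
        have d2 : (cP).dist (.inl b) (.inr b) = 1 := pd_lr_self hc b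
        have d3 : (cP).dist (.inl a) (.inr b) = 2 := pd_lr hc hab
        omega
      · have d1 := dllge2 a ha b hb hab
        have d2 : (cP).dist (.inl b) (.inr c) = 2 := pd_lr hc hbc
        have d3 := pd_lr_le2 hc a c
        omega
    · -- lrl
      have hac : a ≠ c := fun h => hXZ (by rw [h])
      by_cases hab : a = b
      · have hav : a = v := by
          by_contra hav
          exact (hABv a ha b hb hav) hab
        have hcv : c ≠ v := by rw [← hav]; exact Ne.symm hac
        have d1 : (cP).dist (.inl a) (.inr b) = 1 := by rw [← hab]; exact pd_lr_self hc a
        have d2 : (cP).dist (.inr b) (.inl c) = 2 := pd_rl hc (by rw [← hab]; exact hac)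
        have d3 : (cP).dist (.inl a) (.inl c) = 2 := by rw [hav]; exact dll2 c hcc hcv
        omega
      · by_cases hcb : c = b
        · have hcv : c = v := by
            by_contra hcv
            exact (hABv c hcc b hb hcv) hcb
          have hav : a ≠ v := by rw [← hcv]; exact hac
          have d1 : (cP).dist (.inl a) (.inr b) = 2 := pd_lr hc hab
          have d2 : (cP).dist (.inr b) (.inl c) = 1 := by rw [← hcb]; exact pd_rl_self hc c
          have d3 : (cP).dist (.inl a) (.inl c) = 2 := by rw [hcv]; exact dll2' a ha hav
          omega
        · have d1 : (cP).dist (.inl a) (.inr b) = 2 := pd_lr hc hab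
          have d2 : (cP).dist (.inr b) (.inl c) = 2 := pd_rl hc (Ne.symm hcb)
          have d3 := pd_ll_le3 hc hac
          omega
    · -- lrr
      have hbc : b ≠ c := fun h => hYZ (by rw [h])
      by_cases hab : a = b
      · have hav : a = v := by
          by_contra hav
          exact (hABv a ha b hb hav) hab
        have hcv : c ≠ v := by rw [← hav, hab]; exact Ne.symm hbc
        have d1 : (cP).dist (.inl a) (.inr b) = 1 := by rw [← hab]; exact pd_lr_self hc a
        have d2 : (cP).dist (.inr b) (.inr c) = 2 := by
          rw [← hab, hav]; exact drr2 c hcc hcv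
        have d3 : (cP).dist (.inl a) (.inr c) = 2 := pd_lr hc (by rw [hav]; exact Ne.symm hcv)
        omega
      · have d1 : (cP).dist (.inl a) (.inr b) = 2 := pd_lr hc hab
        by_cases hac : a = c
        · have hav : a = v := by
            by_contra hav
            exact (hABv a ha c hcc hav) hac
          have hbv : b ≠ v := by rw [← hav]; exact Ne.symm hab
          have d2 : (cP).dist (.inr b) (.inr c) = 2 := by
            rw [← hac, hav]; exact drr2' b hb hbv
          have d3 : (cP).dist (.inl a) (.inr c) = 1 := by rw [← hac]; exact pd_lr_self hc a
          omega
        · have d3 : (cP).dist (.inl a) (.inr c) = 2 := pd_lr hc hac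
          have d2 := drrge1 b c hbc
          omega
    · -- rll
      have hbc : b ≠ c := fun h => hYZ (by rw [h])
      by_cases hba : b = a
      · have hbv : b = v := by
          by_contra hbv
          exact (hABv b hb a ha hbv) hba
        have hcv : c ≠ v := by rw [← hbv]; exact Ne.symm hbc
        have d1 : (cP).dist (.inr a) (.inl b) = 1 := by rw [hba]; exact pd_rl_self hc a
        have d2 : (cP).dist (.inl b) (.inl c) = 2 := by rw [hbv]; exact dll2 c hcc hcv
        have d3 : (cP).dist (.inr a) (.inl c) = 2 := pd_rl hc (by rw [← hba, hbv]; exact Ne.symm hcv)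
        omega
      · have d1 : (cP).dist (.inr a) (.inl b) = 2 := pd_rl hc (fun h => hba h.symm)
        have d2 := dllge2 b hb c hcc hbc
        have d3 := pd_rl_le2 hc a c
        omega
    · -- rlr
      by_cases hba : b = a
      · have hbv : b = v := by
          by_contra hbv
          exact (hABv b hb a ha hbv) hba
        have hbc : b ≠ c := fun h => by
          apply hXZ; rw [← hba, h]
        have hcv : c ≠ v := by rw [← hbv]; exact Ne.symm hbc
        have d1 : (cP).dist (.inr a) (.inl b) = 1 := by rw [hba]; exact pd_rl_self hc a
        have d2 : (cP).dist (.inl b) (.inr c) = 2 := pd_lr hc hbc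
        have d3 : (cP).dist (.inr a) (.inr c) = 2 := by
          rw [← hba, hbv]; exact drr2 c hcc hcv
        omega
      · by_cases hbc : b = c
        · have hbv : b = v := by
            by_contra hbv
            exact (hABv b hb c hcc hbv) hbc
          have hav : a ≠ v := by rw [← hbv]; exact fun h => hba h.symm
          have d1 : (cP).dist (.inr a) (.inl b) = 2 := pd_rl hc (fun h => hba h.symm)
          have d2 : (cP).dist (.inl b) (.inr c) = 1 := by rw [hbc]; exact pd_lr_self hc c
          have d3 : (cP).dist (.inr a) (.inr c) = 2 := by
            rw [← hbc, hbv]; exact drr2' a ha hav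
          omega
        · have hac : a ≠ c := fun h => hXZ (by rw [h])
          have d1 : (cP).dist (.inr a) (.inl b) = 2 := pd_rl hc (fun h => hba h.symm)
          have d2 : (cP).dist (.inl b) (.inr c) = 2 := pd_lr hc hbc
          have d3 := drrle2 a ha c hcc hac
          omega
    · -- rrl
      have hab : a ≠ b := fun h => hXY (by rw [h])
      by_cases hbc : b = c
      · have hcv : c = v := by
          by_contra hcv
          exact (hABv c hcc b hb hcv) hbc.symm
        have hbv : b = v := hbc.trans hcv
        have hav : a ≠ v := by rw [← hbv]; exact hab
        have d1 : (cP).dist (.inr a) (.inr b) = 2 := by rw [hbv]; exact drr2' a ha hav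
        have d2 : (cP).dist (.inr b) (.inl c) = 1 := by rw [hbc]; exact pd_rl_self hc c
        have d3 : (cP).dist (.inr a) (.inl c) = 2 := pd_rl hc (by rw [← hbc, hbv]; exact hav)
        omega
      · have d1 := drrge1 a b hab
        have d2 : (cP).dist (.inr b) (.inl c) = 2 := pd_rl hc hbc
        have d3 := pd_rl_le2 hc a c
        omega
    · -- rrr
      have hab : a ≠ b := fun h => hXY (by rw [h])
      have hbc : b ≠ c := fun h => hYZ (by rw [h])
      have hac : a ≠ c := fun h => hXZ (by rw [h])
      by_cases hav : a = v
      · have hbv : b ≠ v := by rw [← hav]; exact Ne.symm hab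
        have hcv : c ≠ v := by rw [← hav]; exact Ne.symm hac
        have d1 : (cP).dist (.inr a) (.inr b) = 2 := by rw [hav]; exact drr2 b hb hbv
        have d2 := drr1 b hb c hcc hbv hcv hbc
        have d3 : (cP).dist (.inr a) (.inr c) = 2 := by rw [hav]; exact drr2 c hcc hcv
        omega
      · by_cases hbv : b = v
        · have hcv : c ≠ v := by rw [← hbv]; exact Ne.symm hbc
          have d1 : (cP).dist (.inr a) (.inr b) = 2 := by rw [hbv]; exact drr2' a ha hav
          have d2 : (cP).dist (.inr b) (.inr c) = 2 := by rw [hbv]; exact drr2 c hcc hcv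
          have d3 := drr1 a ha c hcc hav hcv hac
          omega
        · by_cases hcv : c = v
          · have d1 := drr1 a ha b hb hav hbv hab
            have d2 : (cP).dist (.inr b) (.inr c) = 2 := by rw [hcv]; exact drr2' b hb hbv
            have d3 : (cP).dist (.inr a) (.inr c) = 2 := by rw [hcv]; exact drr2' a ha hav
            omega
          · have d1 := drr1 a ha b hb hav hbv hab
            have d2 := drr1 b hb c hcc hbv hcv hbc
            have d3 := drr1 a ha c hcc hav hcv hac
            omega
  · -- cardinality
    have hvSS : v ∉ SS := by
      simp [hSSdef, SimpleGraph.dist_self]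
    have hvNN : v ∉ NN := by
      simp [hNNdef]
    have hdisjNS : Disjoint NN SS := by
      rw [Set.disjoint_left]
      intro x hx1 hx2
      simp only [hNNdef, Set.mem_setOf_eq] at hx1
      simp only [hSSdef, Set.mem_setOf_eq] at hx2
      rw [dist_eq_one_iff_adj.mpr hx1] at hx2
      omega
    have huniv : (Set.univ : Set V) = insert v (NN ∪ SS) := by
      ext z
      simp only [Set.mem_univ, true_iff, Set.mem_insert_iff, Set.mem_union,
        hNNdef, hSSdef, Set.mem_setOf_eq]
      have h2 := hecc z
      rcases Nat.lt_or_ge (T.dist v z) 1 with h | h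
      · left
        have : T.dist v z = 0 := by omega
        exact (hc.dist_eq_zero_iff.mp this).symm
      · rcases Nat.lt_or_ge (T.dist v z) 2 with h' | h'
        · right; left
          exact dist_eq_one_iff_adj.mp (by omega)
        · right; right
          omega
    have hcardV : Fintype.card V = 1 + NN.ncard + SS.ncard := by
      have h1 : (Set.univ : Set V).ncard = Fintype.card V := by
        rw [Set.ncard_univ, Nat.card_eq_fintype_card]
      rw [huniv] at h1
      rw [Set.ncard_insert_of_notMem (by simp [hvNN, hvSS]) (Set.toFinite _)] at h1
      rw [Set.ncard_union_eq hdisjNS (Set.toFinite _) (Set.toFinite _)] at h1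
      omega
    rw [Set.ncard_union_eq ?_ (Set.toFinite _) (Set.toFinite _),
      Set.ncard_image_of_injective _ Sum.inl_injective,
      Set.ncard_image_of_injective _ Sum.inr_injective]
    · rw [hAdef, hBdef, Set.ncard_insert_of_notMem hvSS (Set.toFinite _),
        Set.ncard_insert_of_notMem hvNN (Set.toFinite _)]
      omega
    · rw [Set.disjoint_left]
      rintro _ ⟨a, _, rfl⟩ ⟨b, _, hb⟩
      simp at hb

end Main

lemma isGenPosSet_iff_isGPS {W : Type*} (G : SimpleGraph W) (S : Set W) :
    isGenPosSet G S ↔ isGPS G S := Iff.rfl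

end Helpers

/-- For a tree `T` with `n(T) ≥ 2`: `gp(T\bar{T}) = n(T) + 1` when `diam(T) = 4`,
and `gp(T\bar{T}) = n(T)` otherwise. -/
theorem gp_compPrism_tree {V : Type*} [Fintype V] (T : SimpleGraph V)
    (hT : T.IsTree) (hn : 2 ≤ Fintype.card V) :
    (graphDiam T = 4 → gpNum (compPrism T) = Fintype.card V + 1) ∧
    (graphDiam T ≠ 4 → gpNum (compPrism T) = Fintype.card V) := by
  classical
  constructor
  · intro h4
    unfold gpNum
    apply IsGreatest.csSup_eq
    constructor
    · obtain ⟨S, hS, hcard⟩ := lower4 hT hn h4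
      exact ⟨S, (isGenPosSet_iff_isGPS _ _).mpr hS, hcard⟩
    · rintro m ⟨S, hS, rfl⟩
      exact (upper_bound hT hn ((isGenPosSet_iff_isGPS _ _).mp hS)).1
  · intro h4
    unfold gpNum
    apply IsGreatest.csSup_eq
    constructor
    · obtain ⟨S, hS, hcard⟩ := lowerN hT
      exact ⟨S, (isGenPosSet_iff_isGPS _ _).mpr hS, hcard⟩
    · rintro m ⟨S, hS, rfl⟩
      exact (upper_bound hT hn ((isGenPosSet_iff_isGPS _ _).mp hS)).2 h4
end

section
/- For every n ≥ 2, the hypercube Q_n satisfies gp(Q_n\bar{Q}_n) = 2^n. -/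
open SimpleGraph

variable {V : Type*}

/-! ### Auxiliary machinery for the main theorem -/

namespace GPAux
open SimpleGraph

section DistHelpers
variable {W : Type*} {G : SimpleGraph W} {u v : W}

lemma my_two_le_dist (hr : G.Reachable u v) (hne : u ≠ v) (hadj : ¬ G.Adj u v) :
    2 ≤ G.dist u v := by
  have h0 : G.dist u v ≠ 0 := by
    rw [SimpleGraph.dist_ne_zero_iff_ne_and_reachable]; exact ⟨hne, hr⟩
  have h1 : G.dist u v ≠ 1 := fun h => hadj ((SimpleGraph.dist_eq_one_iff_adj).mp h)
  omega

lemma my_exists_mid (hd : G.dist u v = 2) : ∃ w, G.Adj u w ∧ G.Adj w v := by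
  have hr : G.Reachable u v := SimpleGraph.Reachable.of_dist_ne_zero (by omega)
  obtain ⟨p, hp⟩ := hr.exists_walk_length_eq_dist
  rw [hd] at hp
  cases p with
  | nil => simp at hp
  | cons h q =>
    cases q with
    | nil => simp at hp
    | cons h' r =>
      cases r with
      | nil => exact ⟨_, h, h'⟩
      | cons h'' s => simp [SimpleGraph.Walk.length_cons] at hp

lemma my_three_le_dist (hr : G.Reachable u v) (hne : u ≠ v) (hadj : ¬ G.Adj u v)
    (hmid : ∀ w, ¬ (G.Adj u w ∧ G.Adj w v)) : 3 ≤ G.dist u v := by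
  have h2 := my_two_le_dist hr hne hadj
  rcases eq_or_lt_of_le h2 with h | h
  · obtain ⟨w, hw⟩ := my_exists_mid h.symm
    exact absurd hw (hmid w)
  · exact h

lemma dist_le_of_adj_adj {w : W} (h1 : G.Adj u w) (h2 : G.Adj w v) : G.dist u v ≤ 2 := by
  have := SimpleGraph.dist_le (SimpleGraph.Walk.cons h1 (SimpleGraph.Walk.cons h2 SimpleGraph.Walk.nil))
  simpa using this

lemma dist_le_three_of {w x : W} (h1 : G.Adj u w) (h2 : G.Adj w x) (h3 : G.Adj x v) :
    G.dist u v ≤ 3 := by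
  have := SimpleGraph.dist_le (SimpleGraph.Walk.cons h1 (SimpleGraph.Walk.cons h2
    (SimpleGraph.Walk.cons h3 SimpleGraph.Walk.nil)))
  simpa using this
end DistHelpers

section Hamming
variable {n : ℕ}

noncomputable def Hd (u v : Fin n → Bool) : ℕ := ({i : Fin n | u i ≠ v i}).ncard

lemma Hd_comm (u v : Fin n → Bool) : Hd u v = Hd v u := by
  unfold Hd; congr 1; ext i; exact ne_comm

lemma Hd_eq_zero_iff {u v : Fin n → Bool} : Hd u v = 0 ↔ u = v := by
  unfold Hd
  rw [Set.ncard_eq_zero (Set.toFinite _)]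
  constructor
  · intro h; funext i
    by_contra hi
    exact absurd (Set.eq_empty_iff_forall_notMem.mp h i) (by simp [hi])
  · intro h; subst h; simp

lemma Hd_pos {u v : Fin n → Bool} (h : u ≠ v) : Hd u v ≠ 0 := fun h0 => h (Hd_eq_zero_iff.mp h0)

lemma Hd_triangle (u v w : Fin n → Bool) : Hd u v ≤ Hd u w + Hd w v := by
  unfold Hd
  refine le_trans (Set.ncard_le_ncard ?_ (Set.toFinite _)) (Set.ncard_union_le _ _)
  intro i hi
  simp only [Set.mem_setOf_eq, Set.mem_union] at *
  by_contra hc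
  push_neg at hc
  exact hi (hc.1.symm ▸ hc.2 ▸ rfl)

lemma Hd_le (u v : Fin n → Bool) : Hd u v ≤ n := by
  unfold Hd
  have := Set.ncard_le_ncard (Set.subset_univ {i : Fin n | u i ≠ v i}) (Set.toFinite _)
  simpa [Set.ncard_univ] using this

noncomputable def wt2 (u : Fin n → Bool) : ZMod 2 := ∑ i, (if u i then 1 else 0)

lemma Hd_cast (u v : Fin n → Bool) : (Hd u v : ZMod 2) = wt2 u + wt2 v := by
  unfold Hd wt2
  have hset : ({i : Fin n | u i ≠ v i}) = ↑(Finset.univ.filter fun i => u i ≠ v i) := by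
    ext i; simp
  rw [hset, Set.ncard_coe_finset]
  rw [← Finset.sum_boole]
  rw [← Finset.sum_add_distrib]
  congr 1; funext i
  cases hu : u i <;> cases hv : v i <;> simp <;> decide

lemma Hd_ne_one_of_wt2_eq {u v : Fin n → Bool} (h : wt2 u = wt2 v) : Hd u v ≠ 1 := by
  intro h1
  have := Hd_cast u v
  rw [h1, h] at this
  have h2 : (2 : ZMod 2) * wt2 v = 0 := by
    have : (2 : ZMod 2) = 0 := by decide
    rw [this, zero_mul]
  rw [two_mul] at h2
  rw [h2] at this
  simp at this
end Hamming

section Prism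
variable {n : ℕ}
local notation "P" => compPrism (hypercube n)

lemma adj_ll {u v : Fin n → Bool} : (P).Adj (Sum.inl u) (Sum.inl v) ↔ Hd u v = 1 := Iff.rfl
lemma adj_lr {u v : Fin n → Bool} : (P).Adj (Sum.inl u) (Sum.inr v) ↔ u = v := Iff.rfl
lemma adj_rl {u v : Fin n → Bool} : (P).Adj (Sum.inr u) (Sum.inl v) ↔ u = v := Iff.rfl
lemma adj_rr {u v : Fin n → Bool} : (P).Adj (Sum.inr u) (Sum.inr v) ↔ u ≠ v ∧ Hd u v ≠ 1 := by
  show (hypercube n)ᶜ.Adj u v ↔ _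
  rw [SimpleGraph.compl_adj]
  exact Iff.rfl

/-- A walk of length ≤ 2 from `inl u` to `inr v` when `u ≠ v`. -/
lemma dist_lr_le {u v : Fin n → Bool} (hne : u ≠ v) : (P).dist (Sum.inl u) (Sum.inr v) ≤ 2 := by
  by_cases h1 : Hd u v = 1
  · exact dist_le_of_adj_adj (adj_ll.mpr h1) (adj_lr.mpr rfl)
  · exact dist_le_of_adj_adj (adj_lr.mpr rfl) (adj_rr.mpr ⟨hne, h1⟩)

lemma reach_lr {u v : Fin n → Bool} (hne : u ≠ v) : (P).Reachable (Sum.inl u) (Sum.inr v) := by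
  by_cases h1 : Hd u v = 1
  · exact ((adj_ll.mpr h1).reachable (v := Sum.inl v)).trans (adj_lr.mpr rfl).reachable
  · exact ((adj_lr (v := u)).mpr rfl).reachable.trans (adj_rr.mpr ⟨hne, h1⟩).reachable

lemma dist_lr {u v : Fin n → Bool} (hne : u ≠ v) : (P).dist (Sum.inl u) (Sum.inr v) = 2 := by
  refine le_antisymm (dist_lr_le hne) ?_
  refine my_two_le_dist (reach_lr hne) (by simp) ?_
  rw [adj_lr]; exact hne

lemma dist_lv_rv (v : Fin n → Bool) : (P).dist (Sum.inl v) (Sum.inr v) = 1 :=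
  SimpleGraph.dist_eq_one_iff_adj.mpr (adj_lr.mpr rfl)

lemma dist_ll_one {u v : Fin n → Bool} (h : Hd u v = 1) :
    (P).dist (Sum.inl u) (Sum.inl v) = 1 :=
  SimpleGraph.dist_eq_one_iff_adj.mpr (adj_ll.mpr h)

lemma dist_rr_one {u v : Fin n → Bool} (hne : u ≠ v) (h : Hd u v ≠ 1) :
    (P).dist (Sum.inr u) (Sum.inr v) = 1 :=
  SimpleGraph.dist_eq_one_iff_adj.mpr (adj_rr.mpr ⟨hne, h⟩)

lemma dist_ll_le_three {u v : Fin n → Bool} (hne : u ≠ v) :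
    (P).dist (Sum.inl u) (Sum.inl v) ≤ 3 := by
  by_cases h1 : Hd u v = 1
  · have := SimpleGraph.dist_eq_one_iff_adj.mpr (adj_ll.mpr h1 : (P).Adj _ _)
    omega
  · exact dist_le_three_of (adj_lr.mpr rfl) (adj_rr.mpr ⟨hne, h1⟩) (adj_rl.mpr rfl)

lemma reach_ll {u v : Fin n → Bool} (hne : u ≠ v) :
    (P).Reachable (Sum.inl u) (Sum.inl v) := by
  by_cases h1 : Hd u v = 1
  · exact (adj_ll.mpr h1).reachable
  · exact ((adj_lr (v := u)).mpr rfl).reachable.trans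
      (((adj_rr.mpr ⟨hne, h1⟩).reachable).trans ((adj_rl (v := v)).mpr rfl).reachable)

lemma dist_ll_two_le {u v : Fin n → Bool} (hne : u ≠ v) (h1 : Hd u v ≠ 1) :
    2 ≤ (P).dist (Sum.inl u) (Sum.inl v) := by
  refine my_two_le_dist (reach_ll hne) (by simpa using hne) ?_
  rw [adj_ll]; exact h1

lemma dist_ll_three {u v : Fin n → Bool} (h : 3 ≤ Hd u v) :
    (P).dist (Sum.inl u) (Sum.inl v) = 3 := by
  have hne : u ≠ v := by
    intro he; subst he
    have h0 : Hd u u = 0 := Hd_eq_zero_iff.mpr rfl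
    omega
  refine le_antisymm (dist_ll_le_three hne) ?_
  refine my_three_le_dist (reach_ll hne) (by simpa using hne) (by rw [adj_ll]; omega) ?_
  rintro (w | w) ⟨ha, hb⟩
  · rw [adj_ll] at ha hb
    have := Hd_triangle u v w
    omega
  · rw [adj_lr] at ha
    rw [adj_rl] at hb
    exact hne (ha.trans hb)

lemma reach_rr {u v : Fin n → Bool} (hne : u ≠ v) :
    (P).Reachable (Sum.inr u) (Sum.inr v) :=
  ((adj_rl (v := u)).mpr rfl).reachable.trans ((reach_ll hne).trans (adj_lr.mpr rfl).reachable)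

end Prism

section N2

lemma hd_two_n2 {u w : Fin 2 → Bool} (h : Hd u w = 2) : ∀ i, u i ≠ w i := by
  have hs : {i : Fin 2 | u i ≠ w i} = Set.univ := by
    refine Set.eq_of_subset_of_ncard_le (Set.subset_univ _) ?_
      (Set.toFinite (Set.univ : Set (Fin 2)))
    rw [Set.ncard_univ]
    simp only [Nat.card_eq_fintype_card, Fintype.card_fin]
    unfold Hd at h
    omega
  intro i
  have : i ∈ {i : Fin 2 | u i ≠ w i} := by rw [hs]; exact Set.mem_univ i
  exact this

lemma eq_flip_n2 {u w : Fin 2 → Bool} (h : Hd u w = 2) : w = fun i => ! u i := by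
  funext i
  have := hd_two_n2 h i
  cases hu : u i <;> cases hw : w i <;> simp_all

lemma dist_rr_three_n2 {u v : Fin 2 → Bool} (h : Hd u v = 1) :
    (compPrism (hypercube 2)).dist (Sum.inr u) (Sum.inr v) = 3 := by
  have hne : u ≠ v := by
    intro he; subst he
    have h0 : Hd u u = 0 := Hd_eq_zero_iff.mpr rfl
    omega
  refine le_antisymm ?_ ?_
  · exact dist_le_three_of (adj_rl.mpr rfl) (adj_ll.mpr h) (adj_lr.mpr rfl)
  · refine my_three_le_dist (reach_rr hne) (by simpa using hne) ?_ ?_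
    · rw [adj_rr]
      intro hc
      exact hc.2 h
    · rintro (w | w) ⟨ha, hb⟩
      · rw [adj_rl] at ha
        rw [adj_lr] at hb
        exact hne (ha.trans hb)
      · rw [adj_rr] at ha hb
        have h2a : Hd u w = 2 := by
          have := Hd_le u w; have := Hd_pos ha.1; omega
        have h2b : Hd w v = 2 := by
          have := Hd_le w v; have := Hd_pos hb.1; omega
        have e1 := eq_flip_n2 h2a
        have e2 := eq_flip_n2 ((Hd_comm v w).trans h2b)
        apply hne
        funext i
        have := congrFun (e1.symm.trans e2) i
        simpa using this

end N2

section Count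
variable {n : ℕ}

lemma card_vtx (n : ℕ) : Nat.card (Fin n → Bool) = 2 ^ n := by
  simp [Nat.card_eq_fintype_card]

lemma ncard_sum_set (S : Set ((Fin n → Bool) ⊕ (Fin n → Bool))) :
    S.ncard = {u | Sum.inl u ∈ S}.ncard + {u | Sum.inr u ∈ S}.ncard := by
  have hS : S = Sum.inl '' {u | Sum.inl u ∈ S} ∪ Sum.inr '' {u | Sum.inr u ∈ S} := by
    ext x
    cases x <;> simp
  conv_lhs => rw [hS]
  rw [Set.ncard_union_eq ?dis (Set.toFinite _) (Set.toFinite _),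
    Set.ncard_image_of_injective _ Sum.inl_injective,
    Set.ncard_image_of_injective _ Sum.inr_injective]
  case dis =>
    rw [Set.disjoint_left]
    rintro x ⟨a, _, rfl⟩ ⟨b, _, hb⟩
    exact Sum.inl_ne_inr hb.symm

lemma zmod2_cases (x : ZMod 2) (hx : x ≠ 0) : x = 1 := by
  revert hx; revert x; decide

lemma lower_bound (n : ℕ) :
    ∃ S : Set ((Fin n → Bool) ⊕ (Fin n → Bool)),
      isGenPosSet (compPrism (hypercube n)) S ∧ S.ncard = 2 ^ n := by
  classical
  set A : Set (Fin n → Bool) := {u | wt2 u = 0} with hA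
  refine ⟨Sum.inl '' A ∪ Sum.inr '' Aᶜ, ?_, ?_⟩
  · -- general position
    have pne : ∀ {a b : Fin n → Bool}, a ∈ A → b ∈ Aᶜ → a ≠ b := by
      intro a b ha hb he
      exact hb (he ▸ ha)
    have hne1 : ∀ {a b : Fin n → Bool}, a ∈ A → b ∈ A → Hd a b ≠ 1 := by
      intro a b ha hb
      exact Hd_ne_one_of_wt2_eq (ha.trans hb.symm)
    have hne1' : ∀ {a b : Fin n → Bool}, a ∈ Aᶜ → b ∈ Aᶜ → Hd a b ≠ 1 := by
      intro a b ha hb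
      exact Hd_ne_one_of_wt2_eq ((zmod2_cases _ ha).trans (zmod2_cases _ hb).symm)
    rintro u hu v hv w hw huv hvw huw ⟨hreach, hsum⟩
    rcases hu with ⟨a, ha, rfl⟩ | ⟨a, ha, rfl⟩ <;>
      rcases hv with ⟨b, hb, rfl⟩ | ⟨b, hb, rfl⟩ <;>
        rcases hw with ⟨c, hc, rfl⟩ | ⟨c, hc, rfl⟩
    · -- LLL
      have hab : a ≠ b := fun h => huv (by rw [h])
      have hbc : b ≠ c := fun h => hvw (by rw [h])
      have hac : a ≠ c := fun h => huw (by rw [h])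
      have d1 := dist_ll_two_le hab (hne1 ha hb)
      have d2 := dist_ll_two_le hbc (hne1 hb hc)
      have d3 := dist_ll_le_three hac
      omega
    · -- LLR
      have hab : a ≠ b := fun h => huv (by rw [h])
      have d1 := dist_ll_two_le hab (hne1 ha hb)
      have d2 := dist_lr (pne hb hc)
      have d3 := dist_lr (pne ha hc)
      omega
    · -- LRL
      have hac : a ≠ c := fun h => huw (by rw [h])
      have d1 := dist_lr (pne ha hb)
      have d2 : (compPrism (hypercube n)).dist (Sum.inr b) (Sum.inl c) = 2 := by
        rw [SimpleGraph.dist_comm]; exact dist_lr (pne hc hb)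
      have d3 := dist_ll_le_three hac
      omega
    · -- LRR
      have hbc : b ≠ c := fun h => hvw (by rw [h])
      have d1 := dist_lr (pne ha hb)
      have d2 := dist_rr_one hbc (hne1' hb hc)
      have d3 := dist_lr (pne ha hc)
      omega
    · -- RLL
      have hbc : b ≠ c := fun h => hvw (by rw [h])
      have d1 : (compPrism (hypercube n)).dist (Sum.inr a) (Sum.inl b) = 2 := by
        rw [SimpleGraph.dist_comm]; exact dist_lr (pne hb ha)
      have d2 := dist_ll_two_le hbc (hne1 hb hc)
      have d3 : (compPrism (hypercube n)).dist (Sum.inr a) (Sum.inl c) = 2 := by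
        rw [SimpleGraph.dist_comm]; exact dist_lr (pne hc ha)
      omega
    · -- RLR
      have hac : a ≠ c := fun h => huw (by rw [h])
      have d1 : (compPrism (hypercube n)).dist (Sum.inr a) (Sum.inl b) = 2 := by
        rw [SimpleGraph.dist_comm]; exact dist_lr (pne hb ha)
      have d2 := dist_lr (pne hb hc)
      have d3 := dist_rr_one hac (hne1' ha hc)
      omega
    · -- RRL
      have hab : a ≠ b := fun h => huv (by rw [h])
      have d1 := dist_rr_one hab (hne1' ha hb)
      have d2 : (compPrism (hypercube n)).dist (Sum.inr b) (Sum.inl c) = 2 := by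
        rw [SimpleGraph.dist_comm]; exact dist_lr (pne hc hb)
      have d3 : (compPrism (hypercube n)).dist (Sum.inr a) (Sum.inl c) = 2 := by
        rw [SimpleGraph.dist_comm]; exact dist_lr (pne hc ha)
      omega
    · -- RRR
      have hab : a ≠ b := fun h => huv (by rw [h])
      have hbc : b ≠ c := fun h => hvw (by rw [h])
      have hac : a ≠ c := fun h => huw (by rw [h])
      have d1 := dist_rr_one hab (hne1' ha hb)
      have d2 := dist_rr_one hbc (hne1' hb hc)
      have d3 := dist_rr_one hac (hne1' ha hc)
      omega
  · -- cardinality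
    rw [Set.ncard_union_eq ?dis (Set.toFinite _) (Set.toFinite _),
      Set.ncard_image_of_injective _ Sum.inl_injective,
      Set.ncard_image_of_injective _ Sum.inr_injective,
      Set.ncard_add_ncard_compl, card_vtx]
    case dis =>
      rw [Set.disjoint_left]
      rintro x ⟨a, _, rfl⟩ ⟨b, _, hb⟩
      exact Sum.inl_ne_inr hb.symm

end Count

section Upper
variable {n : ℕ}
local notation "P" => compPrism (hypercube n)

lemma rule_left {S : Set ((Fin n → Bool) ⊕ (Fin n → Bool))} (hS : isGenPosSet (P) S)
    {v u : Fin n → Bool} (hv1 : Sum.inl v ∈ S) (hv2 : Sum.inr v ∈ S)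
    (hu : Sum.inl u ∈ S) (hne : u ≠ v) : Hd u v = 2 := by
  have h0 := Hd_pos hne
  have hne1 : Hd u v ≠ 1 := by
    intro h1
    refine hS _ hu _ hv1 _ hv2 (by simpa using hne) (by simp) (by simp) ?_
    refine ⟨reach_lr hne, ?_⟩
    rw [dist_ll_one h1, dist_lv_rv, dist_lr hne]
  have hne3 : ¬ 3 ≤ Hd u v := by
    intro h3
    refine hS _ hu _ hv2 _ hv1 (by simp) (by simp) (by simpa using hne) ?_
    refine ⟨reach_ll hne, ?_⟩
    have e2 : (P).dist (Sum.inr v) (Sum.inl v) = 1 := by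
      rw [SimpleGraph.dist_comm]; exact dist_lv_rv v
    rw [dist_lr hne, e2, dist_ll_three h3]
  omega

lemma rule_right {S : Set ((Fin n → Bool) ⊕ (Fin n → Bool))} (hS : isGenPosSet (P) S)
    {v u : Fin n → Bool} (hv1 : Sum.inl v ∈ S) (hv2 : Sum.inr v ∈ S)
    (hu : Sum.inr u ∈ S) (hne : u ≠ v) : Hd u v = 1 := by
  have h0 := Hd_pos hne
  by_contra h1
  refine hS _ hu _ hv2 _ hv1 (by simpa using hne) (by simp) (by simp) ?_
  refine ⟨((adj_rr.mpr ⟨hne, h1⟩).reachable).trans ((adj_rl.mpr rfl).reachable), ?_⟩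
  have e2 : (P).dist (Sum.inr v) (Sum.inl v) = 1 := by
    rw [SimpleGraph.dist_comm]; exact dist_lv_rv v
  have e3 : (P).dist (Sum.inr u) (Sum.inl v) = 2 := by
    rw [SimpleGraph.dist_comm]; exact dist_lr hne.symm
  rw [dist_rr_one hne h1, e2, e3]

end Upper

lemma rule_right_n2 {S : Set ((Fin 2 → Bool) ⊕ (Fin 2 → Bool))}
    (hS : isGenPosSet (compPrism (hypercube 2)) S)
    {v u : Fin 2 → Bool} (hv1 : Sum.inl v ∈ S) (hv2 : Sum.inr v ∈ S)
    (hu : Sum.inr u ∈ S) (hne : u ≠ v) : False := by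
  have h1 : Hd u v = 1 := rule_right hS hv1 hv2 hu hne
  refine hS _ hu _ hv1 _ hv2 (by simp) (by simp) (by simpa using hne) ?_
  refine ⟨reach_rr hne, ?_⟩
  have e1 : (compPrism (hypercube 2)).dist (Sum.inr u) (Sum.inl v) = 2 := by
    rw [SimpleGraph.dist_comm]; exact dist_lr hne.symm
  rw [e1, dist_lv_rv, dist_rr_three_n2 h1]

section UB
variable {n : ℕ}

lemma upper_bound (hn : 2 ≤ n) {S : Set ((Fin n → Bool) ⊕ (Fin n → Bool))}
    (hS : isGenPosSet (compPrism (hypercube n)) S) : S.ncard ≤ 2 ^ n := by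
  classical
  rw [ncard_sum_set S]
  set A : Set (Fin n → Bool) := {u | Sum.inl u ∈ S} with hA
  set B : Set (Fin n → Bool) := {u | Sum.inr u ∈ S} with hB
  rcases Set.eq_empty_or_nonempty (A ∩ B) with hAB | ⟨v, hvA, hvB⟩
  · have key := Set.ncard_union_add_ncard_inter A B (Set.toFinite _) (Set.toFinite _)
    have hcap : (A ∩ B).ncard = 0 := by rw [hAB]; simp
    have hle : (A ∪ B).ncard ≤ 2 ^ n := by
      have := Set.ncard_le_ncard (Set.subset_univ (A ∪ B)) (Set.toFinite _)
      rwa [Set.ncard_univ, card_vtx] at this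
    omega
  · have hvA' : Sum.inl v ∈ S := hvA
    have hvB' : Sum.inr v ∈ S := hvB
    rcases Nat.lt_or_ge n 3 with h2 | h3
    · -- n = 2
      have hn2 : n = 2 := by omega
      subst hn2
      have hBsub : B ⊆ {v} := by
        intro u hu
        by_contra hne
        exact rule_right_n2 hS hvA' hvB' hu (by simpa using hne)
      have hAsub : A ⊆ {v, fun i => ! v i} := by
        intro u hu
        by_cases hne : u = v
        · exact Or.inl hne
        · have h2d := rule_left hS hvA' hvB' hu hne
          have := eq_flip_n2 h2d
          right
          funext i
          have hvi := congrFun this i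
          cases hui : u i <;> cases hvvi : v i <;> simp_all
      have hAc : A.ncard ≤ 2 := by
        refine le_trans (Set.ncard_le_ncard hAsub (Set.toFinite _)) ?_
        refine le_trans (Set.ncard_insert_le _ _) ?_
        simp
      have hBc : B.ncard ≤ 1 := by
        refine le_trans (Set.ncard_le_ncard hBsub (Set.toFinite _)) ?_
        simp
      omega
    · -- 3 ≤ n
      set u₀ : Fin n → Bool := fun i => if (i : ℕ) < 3 then ! v i else v i with hu₀
      have hd3 : Hd u₀ v = 3 := by
        have hset : {i : Fin n | u₀ i ≠ v i} = {i : Fin n | (i : ℕ) < 3} := by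
          ext i
          simp only [Set.mem_setOf_eq, hu₀]
          by_cases hi : (i : ℕ) < 3 <;> simp [hi]
        have himg : {i : Fin n | (i : ℕ) < 3} = (Fin.castLE h3) '' Set.univ := by
          ext i
          simp only [Set.mem_setOf_eq, Set.image_univ, Set.mem_range]
          constructor
          · intro hi; exact ⟨⟨(i : ℕ), hi⟩, by ext; simp⟩
          · rintro ⟨j, rfl⟩; exact j.isLt
        unfold Hd
        rw [hset, himg, Set.ncard_image_of_injective _ (Fin.castLE_injective h3),
          Set.ncard_univ]
        simp [Nat.card_eq_fintype_card]
      have hu0v : u₀ ≠ v := fun h => by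
        have := Hd_eq_zero_iff.mpr h; omega
      have hu0A : u₀ ∉ A := by
        intro h
        have := rule_left hS hvA' hvB' h hu0v
        omega
      have hu0B : u₀ ∉ B := by
        intro h
        have := rule_right hS hvA' hvB' h hu0v
        omega
      have hsub : A ∪ B ⊆ {u₀}ᶜ := by
        rintro x (hx | hx) (rfl : x = u₀)
        · exact hu0A hx
        · exact hu0B hx
      have hcompl : ({u₀}ᶜ : Set (Fin n → Bool)).ncard = 2 ^ n - 1 := by
        have key := Set.ncard_add_ncard_compl ({u₀} : Set (Fin n → Bool))
          (Set.toFinite _) (Set.toFinite _)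
        rw [Set.ncard_singleton, card_vtx] at key
        omega
      have hU : (A ∪ B).ncard ≤ 2 ^ n - 1 := by
        rw [← hcompl]
        exact Set.ncard_le_ncard hsub (Set.toFinite _)
      have hIsub : A ∩ B ⊆ {v} := by
        rintro u ⟨huA, huB⟩
        by_contra hne
        have e1 := rule_left hS hvA' hvB' huA (by simpa using hne)
        have e2 := rule_right hS hvA' hvB' huB (by simpa using hne)
        omega
      have hI : (A ∩ B).ncard ≤ 1 := by
        refine le_trans (Set.ncard_le_ncard hIsub (Set.toFinite _)) ?_
        simp
      have key := Set.ncard_union_add_ncard_inter A B (Set.toFinite _) (Set.toFinite _)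
      have hpos : 1 ≤ 2 ^ n := Nat.one_le_two_pow
      omega

end UB
end GPAux

/-- For `n ≥ 2`, the hypercube satisfies `gp(Q_n \bar{Q}_n) = 2 ^ n`. -/
theorem gp_compPrism_hypercube (n : ℕ) (hn : 2 ≤ n) :
    gpNum (compPrism (hypercube n)) = 2 ^ n := by
  obtain ⟨S₀, hgp, hcard⟩ := GPAux.lower_bound n
  unfold gpNum
  have hmem : (2 : ℕ) ^ n ∈
      {m : ℕ | ∃ S, isGenPosSet (compPrism (hypercube n)) S ∧ S.ncard = m} :=
    ⟨S₀, hgp, hcard⟩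
  have hub : ∀ m ∈ {m : ℕ | ∃ S, isGenPosSet (compPrism (hypercube n)) S ∧ S.ncard = m},
      m ≤ 2 ^ n := by
    rintro m ⟨S, hS, rfl⟩
    exact GPAux.upper_bound hn hS
  exact le_antisymm (csSup_le ⟨_, hmem⟩ hub) (le_csSup ⟨2 ^ n, hub⟩ hmem)
end

section
/- Let G be a finite split graph with split partition (C, I). If deg_G(x) ≥ |C| + 1 for every vertex x ∈ C and deg_G(y) ≤ |C| − 2 for every vertex y ∈ I, then gp(G\bar{G}) = n(G). -/
open SimpleGraph

variable {V : Type*}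

section AuxCompPrism

private lemma aux_dist_eq_two {W : Type*} {G : SimpleGraph W} {a b c : W} (hab : a ≠ b)
    (hn : ¬ G.Adj a b) (h1 : G.Adj a c) (h2 : G.Adj c b) : G.dist a b = 2 := by
  have hle : G.dist a b ≤ 2 := by
    simpa using SimpleGraph.dist_le (SimpleGraph.Walk.cons h1 (SimpleGraph.Walk.cons h2 SimpleGraph.Walk.nil))
  have hr : G.Reachable a b := ⟨SimpleGraph.Walk.cons h1 (SimpleGraph.Walk.cons h2 SimpleGraph.Walk.nil)⟩
  have h0 : 0 < G.dist a b := hr.pos_dist_of_ne hab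
  have h1' : G.dist a b ≠ 1 := fun h => hn (SimpleGraph.dist_eq_one_iff_adj.mp h)
  omega

private lemma cp_adj_ll_s15 {W : Type*} {G : SimpleGraph W} {a b : W} :
    (compPrism G).Adj (Sum.inl a) (Sum.inl b) ↔ G.Adj a b := Iff.rfl

private lemma cp_adj_rr_s15 {W : Type*} {G : SimpleGraph W} {a b : W} :
    (compPrism G).Adj (Sum.inr a) (Sum.inr b) ↔ a ≠ b ∧ ¬ G.Adj a b := by
  constructor
  · intro h; exact (G.compl_adj a b).mp h
  · intro h; exact (G.compl_adj a b).mpr h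

private lemma cp_adj_lr_s15 {W : Type*} {G : SimpleGraph W} {a b : W} :
    (compPrism G).Adj (Sum.inl a) (Sum.inr b) ↔ a = b := Iff.rfl

private lemma cp_dist_lr_self {W : Type*} (G : SimpleGraph W) (v : W) :
    (compPrism G).dist (Sum.inl v) (Sum.inr v) = 1 :=
  SimpleGraph.dist_eq_one_iff_adj.mpr (cp_adj_lr_s15.mpr rfl)

private lemma cp_dist_rl_self {W : Type*} (G : SimpleGraph W) (v : W) :
    (compPrism G).dist (Sum.inr v) (Sum.inl v) = 1 := by
  rw [SimpleGraph.dist_comm]; exact cp_dist_lr_self G v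

private lemma cp_dist_lr {W : Type*} (G : SimpleGraph W) {u v : W} (h : u ≠ v) :
    (compPrism G).dist (Sum.inl u) (Sum.inr v) = 2 := by
  have hne : (Sum.inl u : W ⊕ W) ≠ Sum.inr v := by simp
  have hnadj : ¬ (compPrism G).Adj (Sum.inl u) (Sum.inr v) := fun hc => h (cp_adj_lr_s15.mp hc)
  by_cases hadj : G.Adj u v
  · exact aux_dist_eq_two hne hnadj (cp_adj_ll_s15.mpr hadj) (cp_adj_lr_s15.mpr rfl)
  · exact aux_dist_eq_two hne hnadj (cp_adj_lr_s15.mpr rfl) (cp_adj_rr_s15.mpr ⟨h, hadj⟩)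

private lemma cp_dist_rl {W : Type*} (G : SimpleGraph W) {u v : W} (h : u ≠ v) :
    (compPrism G).dist (Sum.inr u) (Sum.inl v) = 2 := by
  rw [SimpleGraph.dist_comm]; exact cp_dist_lr G (Ne.symm h)

end AuxCompPrism

/-- For a split graph `G` with split partition `(C, I)`: if `deg_G(x) ≥ |C| + 1`
for every `x ∈ C` and `deg_G(y) ≤ |C| - 2` for every `y ∈ I`, then
`gp(G\bar{G}) = n(G)`. -/
theorem gp_compPrism_split_eq_card {V : Type*} [Fintype V] (G : SimpleGraph V)
    (C I : Set V) (hunion : C ∪ I = Set.univ) (hdisj : Disjoint C I)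
    (hC : G.IsClique C) (hI : ∀ u ∈ I, ∀ w ∈ I, ¬ G.Adj u w)
    (hdegC : ∀ x ∈ C, C.ncard + 1 ≤ (G.neighborSet x).ncard)
    (hdegI : ∀ y ∈ I, ((G.neighborSet y).ncard : ℤ) ≤ (C.ncard : ℤ) - 2) :
    gpNum (compPrism G) = Fintype.card V := by
  classical
  have hmemCI : ∀ w : V, w ∈ C ∪ I := by intro w; rw [hunion]; trivial
  -- ===================== Upper bound =====================
  have key : ∀ S : Set (V ⊕ V), isGenPosSet (compPrism G) S → S.ncard ≤ Fintype.card V := by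
    intro S hS
    by_contra hbig
    push_neg at hbig
    set A : Set V := Sum.inl ⁻¹' S with hA
    set B : Set V := Sum.inr ⁻¹' S with hB
    have hSeq : S = Sum.inl '' A ∪ Sum.inr '' B := by
      ext x
      cases x with
      | inl a => simp [hA]
      | inr b => simp [hB]
    have hdisjLR : Disjoint (Sum.inl '' A : Set (V ⊕ V)) (Sum.inr '' B) := by
      rw [Set.disjoint_left]
      rintro _ ⟨a, _, rfl⟩ ⟨b, _, hb⟩
      simp at hb
    have hcardS : S.ncard = A.ncard + B.ncard := by
      rw [hSeq, Set.ncard_union_eq hdisjLR,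
        Set.ncard_image_of_injective _ Sum.inl_injective,
        Set.ncard_image_of_injective _ Sum.inr_injective]
    -- claim 1 : two left vertices together with a matched right vertex
    have claim1 : ∀ v w : V, v ∈ A → v ∈ B → w ∈ A → w ≠ v → ¬ G.Adj v w := by
      intro v w hvA hvB hwA hwv hadj
      refine hS (Sum.inl w) hwA (Sum.inl v) hvA (Sum.inr v) hvB
        (by simpa using hwv) (by simp) (by simp) ⟨?_, ?_⟩
      · exact ⟨SimpleGraph.Walk.cons (cp_adj_ll_s15.mpr hadj.symm)
          (SimpleGraph.Walk.cons (cp_adj_lr_s15.mpr rfl) SimpleGraph.Walk.nil)⟩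
      · rw [SimpleGraph.dist_eq_one_iff_adj.mpr (cp_adj_ll_s15.mpr hadj.symm),
          cp_dist_lr_self, cp_dist_lr G hwv]
    have claim2 : ∀ v w : V, v ∈ A → v ∈ B → w ∈ B → w ≠ v → G.Adj v w := by
      intro v w hvA hvB hwB hwv
      by_contra hadj
      have hadj' : (compPrism G).Adj (Sum.inr w) (Sum.inr v) :=
        cp_adj_rr_s15.mpr ⟨hwv, fun h => hadj h.symm⟩
      refine hS (Sum.inr w) hwB (Sum.inr v) hvB (Sum.inl v) hvA
        (by simpa using hwv) (by simp) (by simp) ⟨?_, ?_⟩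
      · exact ⟨SimpleGraph.Walk.cons hadj'
          (SimpleGraph.Walk.cons (cp_adj_lr_s15.mpr rfl).symm SimpleGraph.Walk.nil)⟩
      · rw [SimpleGraph.dist_eq_one_iff_adj.mpr hadj', cp_dist_rl_self, cp_dist_rl G hwv]
    -- the intersection has at most one element
    have hK : (A ∩ B).ncard ≤ 1 := by
      rw [Set.ncard_le_one (Set.toFinite _)]
      rintro v ⟨hvA, hvB⟩ w ⟨hwA, hwB⟩
      by_contra hne
      exact claim1 v w hvA hvB hwA (Ne.symm hne) (claim2 v w hvA hvB hwB (Ne.symm hne))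
    have hU : (A ∪ B).ncard ≤ Fintype.card V := by
      have := Set.ncard_le_ncard (Set.subset_univ (A ∪ B)) (Set.toFinite _)
      rwa [Set.ncard_univ, Nat.card_eq_fintype_card] at this
    have hsum : (A ∪ B).ncard + (A ∩ B).ncard = A.ncard + B.ncard :=
      Set.ncard_union_add_ncard_inter A B (Set.toFinite _) (Set.toFinite _)
    -- hence A ∪ B = univ and A ∩ B is a singleton
    have hABuniv : A ∪ B = Set.univ := by
      refine Set.eq_of_subset_of_ncard_le (Set.subset_univ _) ?_ (Set.toFinite _)
      rw [Set.ncard_univ, Nat.card_eq_fintype_card]; omega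
    have hKne : (A ∩ B).Nonempty := by
      rw [← Set.ncard_pos (Set.toFinite _)]; omega
    obtain ⟨v0, hv0A, hv0B⟩ := hKne
    have hcover : ∀ w : V, w ∈ A ∨ w ∈ B := by
      intro w
      have : w ∈ A ∪ B := hABuniv ▸ Set.mem_univ w
      exact this
    have hAv : ∀ w : V, w ≠ v0 → w ∈ A → ¬ G.Adj v0 w :=
      fun w hw hwA => claim1 v0 w hv0A hv0B hwA hw
    have hBv : ∀ w : V, w ≠ v0 → w ∈ B → G.Adj v0 w :=
      fun w hw hwB => claim2 v0 w hv0A hv0B hwB hw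
    -- now split on whether v0 ∈ C or v0 ∈ I
    rcases hmemCI v0 with hv0C | hv0I
    · -- v0 ∈ C : find y ∈ I adjacent to v0, then two common non-neighbours x, x' of y in C
      have hCpos : 0 < C.ncard := (Set.ncard_pos (Set.toFinite _)).mpr ⟨v0, hv0C⟩
      have hy : ∃ y ∈ I, G.Adj v0 y := by
        by_contra hcon
        push_neg at hcon
        have hsub : G.neighborSet v0 ⊆ C \ {v0} := by
          intro w hw
          rcases hmemCI w with hwC | hwI
          · exact ⟨hwC, fun h => G.irrefl ((Set.mem_singleton_iff.mp h) ▸ hw)⟩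
          · exact absurd hw (hcon w hwI)
        have h1 := Set.ncard_le_ncard hsub (Set.toFinite _)
        rw [Set.ncard_diff_singleton_of_mem hv0C] at h1
        have h2 := hdegC v0 hv0C
        omega
      obtain ⟨y, hyI, hadjy⟩ := hy
      have hyv0 : y ≠ v0 := fun h => hdisj.ne_of_mem hv0C hyI h.symm
      have hyB : y ∈ B := by
        rcases hcover y with hyA | hyB
        · exact absurd hadjy (hAv y hyv0 hyA)
        · exact hyB
      have hNsub : G.neighborSet y ⊆ C := by
        intro w hw
        rcases hmemCI w with hwC | hwI
        · exact hwC
        · exact absurd hw (hI y hyI w hwI)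
      have hdiff : (C \ G.neighborSet y).ncard = C.ncard - (G.neighborSet y).ncard :=
        Set.ncard_diff hNsub (Set.toFinite _)
      have hN2 : (G.neighborSet y).ncard + 2 ≤ C.ncard := by
        have := hdegI y hyI; omega
      have h2lt : 1 < (C \ G.neighborSet y).ncard := by omega
      obtain ⟨x, x', ⟨hxC, hxN⟩, ⟨hx'C, hx'N⟩, hxx'⟩ :=
        (Set.one_lt_ncard_iff (Set.toFinite _)).mp h2lt
      -- x, x' ∈ C, not adjacent to y
      have hxy : ¬ G.Adj y x := hxN
      have hx'y : ¬ G.Adj y x' := hx'N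
      have hxv0 : x ≠ v0 := fun h => hxy (h ▸ hadjy.symm)
      have hx'v0 : x' ≠ v0 := fun h => hx'y (h ▸ hadjy.symm)
      have hxB : x ∈ B := by
        rcases hcover x with hxA | hxB
        · exact absurd (hC hv0C hxC (Ne.symm hxv0)) (hAv x hxv0 hxA)
        · exact hxB
      have hx'B : x' ∈ B := by
        rcases hcover x' with hx'A | hx'B
        · exact absurd (hC hv0C hx'C (Ne.symm hx'v0)) (hAv x' hx'v0 hx'A)
        · exact hx'B
      have hxy' : x ≠ y := hdisj.ne_of_mem hxC hyI
      have hx'y' : x' ≠ y := hdisj.ne_of_mem hx'C hyI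
      have hady1 : (compPrism G).Adj (Sum.inr x) (Sum.inr y) :=
        cp_adj_rr_s15.mpr ⟨hxy', fun h => hxy h.symm⟩
      have hady2 : (compPrism G).Adj (Sum.inr y) (Sum.inr x') :=
        cp_adj_rr_s15.mpr ⟨Ne.symm hx'y', hx'y⟩
      have hnadj : ¬ (compPrism G).Adj (Sum.inr x) (Sum.inr x') :=
        fun h => (cp_adj_rr_s15.mp h).2 (hC hxC hx'C hxx')
      refine hS (Sum.inr x) hxB (Sum.inr y) hyB (Sum.inr x') hx'B
        (by simpa using hxy') (by simpa using Ne.symm hx'y') (by simpa using hxx') ⟨?_, ?_⟩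
      · exact ⟨SimpleGraph.Walk.cons hady1 (SimpleGraph.Walk.cons hady2 SimpleGraph.Walk.nil)⟩
      · rw [SimpleGraph.dist_eq_one_iff_adj.mpr hady1, SimpleGraph.dist_eq_one_iff_adj.mpr hady2,
          aux_dist_eq_two (by simpa using hxx') hnadj hady1 hady2]
    · -- v0 ∈ I : find x ∈ C not adjacent to v0, then two neighbours y, y' of x in I
      have hNsub : G.neighborSet v0 ⊆ C := by
        intro w hw
        rcases hmemCI w with hwC | hwI
        · exact hwC
        · exact absurd hw (hI v0 hv0I w hwI)
      have hdiff : (C \ G.neighborSet v0).ncard = C.ncard - (G.neighborSet v0).ncard :=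
        Set.ncard_diff hNsub (Set.toFinite _)
      have hN2 : (G.neighborSet v0).ncard + 2 ≤ C.ncard := by
        have := hdegI v0 hv0I; omega
      have hpos : 0 < (C \ G.neighborSet v0).ncard := by omega
      obtain ⟨x, hxC, hxN⟩ := (Set.ncard_pos (Set.toFinite _)).mp hpos
      have hxadj : ¬ G.Adj v0 x := hxN
      have hxv0 : x ≠ v0 := hdisj.ne_of_mem hxC hv0I
      have hxA : x ∈ A := by
        rcases hcover x with hxA | hxB
        · exact hxA
        · exact absurd (hBv x hxv0 hxB) hxadj
      -- x has at least two neighbours in I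
      have hNC : G.neighborSet x ∩ C ⊆ C \ {x} := by
        rintro w ⟨hw, hwC⟩
        exact ⟨hwC, fun h => G.ne_of_adj hw (by simpa using h.symm)⟩
      have hNCcard : (G.neighborSet x ∩ C).ncard ≤ C.ncard - 1 := by
        have h1 := Set.ncard_le_ncard hNC (Set.toFinite _)
        rw [Set.ncard_diff_singleton_of_mem hxC] at h1
        exact h1
      have hNdecomp : (G.neighborSet x ∩ C).ncard + (G.neighborSet x ∩ I).ncard
          = (G.neighborSet x).ncard := by
        rw [← Set.ncard_union_eq (hdisj.mono Set.inter_subset_right Set.inter_subset_right)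
          (Set.toFinite _) (Set.toFinite _), ← Set.inter_union_distrib_left, hunion,
          Set.inter_univ]
      have hCpos : 0 < C.ncard := (Set.ncard_pos (Set.toFinite _)).mpr ⟨x, hxC⟩
      have hNI2 : 1 < (G.neighborSet x ∩ I).ncard := by
        have := hdegC x hxC; omega
      obtain ⟨y, y', ⟨hyN, hyI'⟩, ⟨hy'N, hy'I'⟩, hyy'⟩ :=
        (Set.one_lt_ncard_iff (Set.toFinite _)).mp hNI2
      have hyadj : G.Adj x y := hyN
      have hy'adj : G.Adj x y' := hy'N
      have hyv0 : y ≠ v0 := fun h => hxadj (h ▸ hyadj.symm)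
      have hy'v0 : y' ≠ v0 := fun h => hxadj (h ▸ hy'adj.symm)
      have hyA : y ∈ A := by
        rcases hcover y with hyA | hyB
        · exact hyA
        · exact absurd (hBv y hyv0 hyB) (hI v0 hv0I y hyI')
      have hy'A : y' ∈ A := by
        rcases hcover y' with hy'A | hy'B
        · exact hy'A
        · exact absurd (hBv y' hy'v0 hy'B) (hI v0 hv0I y' hy'I')
      have hyx : y ≠ x := fun h => G.irrefl (h ▸ hyadj)
      have hxy' : x ≠ y' := fun h => G.irrefl (h ▸ hy'adj)
      have hady1 : (compPrism G).Adj (Sum.inl y) (Sum.inl x) := cp_adj_ll_s15.mpr hyadj.symm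
      have hady2 : (compPrism G).Adj (Sum.inl x) (Sum.inl y') := cp_adj_ll_s15.mpr hy'adj
      have hnadj : ¬ (compPrism G).Adj (Sum.inl y) (Sum.inl y') :=
        fun h => hI y hyI' y' hy'I' (cp_adj_ll_s15.mp h)
      refine hS (Sum.inl y) hyA (Sum.inl x) hxA (Sum.inl y') hy'A
        (by simpa using hyx) (by simpa using hxy') (by simpa using hyy') ⟨?_, ?_⟩
      · exact ⟨SimpleGraph.Walk.cons hady1 (SimpleGraph.Walk.cons hady2 SimpleGraph.Walk.nil)⟩
      · rw [SimpleGraph.dist_eq_one_iff_adj.mpr hady1, SimpleGraph.dist_eq_one_iff_adj.mpr hady2,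
          aux_dist_eq_two (by simpa using hyy') hnadj hady1 hady2]
  -- ===================== Lower bound =====================
  set S0 : Set (V ⊕ V) := Sum.inl '' C ∪ Sum.inr '' I with hS0
  have hcard0 : S0.ncard = Fintype.card V := by
    have hdisjLR : Disjoint (Sum.inl '' C : Set (V ⊕ V)) (Sum.inr '' I) := by
      rw [Set.disjoint_left]
      rintro _ ⟨a, _, rfl⟩ ⟨b, _, hb⟩
      simp at hb
    rw [hS0, Set.ncard_union_eq hdisjLR,
      Set.ncard_image_of_injective _ Sum.inl_injective,
      Set.ncard_image_of_injective _ Sum.inr_injective,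
      ← Set.ncard_union_eq hdisj (Set.toFinite _) (Set.toFinite _), hunion,
      Set.ncard_univ, Nat.card_eq_fintype_card]
  have hgp0 : isGenPosSet (compPrism G) S0 := by
    -- all pairwise distances are 1 (same side) or 2 (different sides)
    have dLL : ∀ c ∈ C, ∀ c' ∈ C, c ≠ c' → (compPrism G).dist (Sum.inl c) (Sum.inl c') = 1 :=
      fun c hc c' hc' hne =>
        SimpleGraph.dist_eq_one_iff_adj.mpr (cp_adj_ll_s15.mpr (hC hc hc' hne))
    have dRR : ∀ y ∈ I, ∀ y' ∈ I, y ≠ y' → (compPrism G).dist (Sum.inr y) (Sum.inr y') = 1 :=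
      fun y hy y' hy' hne =>
        SimpleGraph.dist_eq_one_iff_adj.mpr (cp_adj_rr_s15.mpr ⟨hne, hI y hy y' hy'⟩)
    have dLR : ∀ c ∈ C, ∀ y ∈ I, (compPrism G).dist (Sum.inl c) (Sum.inr y) = 2 :=
      fun c hc y hy => cp_dist_lr G (hdisj.ne_of_mem hc hy)
    have dRL : ∀ y ∈ I, ∀ c ∈ C, (compPrism G).dist (Sum.inr y) (Sum.inl c) = 2 :=
      fun y hy c hc => cp_dist_rl G (Ne.symm (hdisj.ne_of_mem hc hy))
    rintro u hu v hv w hw huv hvw huw ⟨_, heq⟩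
    rcases hu with ⟨cu, hcu, rfl⟩ | ⟨yu, hyu, rfl⟩ <;>
      rcases hv with ⟨cv, hcv, rfl⟩ | ⟨yv, hyv, rfl⟩ <;>
      rcases hw with ⟨cw, hcw, rfl⟩ | ⟨yw, hyw, rfl⟩
    · rw [dLL cu hcu cv hcv (by simpa using huv), dLL cv hcv cw hcw (by simpa using hvw),
        dLL cu hcu cw hcw (by simpa using huw)] at heq; omega
    · rw [dLL cu hcu cv hcv (by simpa using huv), dLR cv hcv yw hyw,
        dLR cu hcu yw hyw] at heq; omega
    · rw [dLR cu hcu yv hyv, dRL yv hyv cw hcw,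
        dLL cu hcu cw hcw (by simpa using huw)] at heq; omega
    · rw [dLR cu hcu yv hyv, dRR yv hyv yw hyw (by simpa using hvw),
        dLR cu hcu yw hyw] at heq; omega
    · rw [dRL yu hyu cv hcv, dLL cv hcv cw hcw (by simpa using hvw),
        dRL yu hyu cw hcw] at heq; omega
    · rw [dRL yu hyu cv hcv, dLR cv hcv yw hyw,
        dRR yu hyu yw hyw (by simpa using huw)] at heq; omega
    · rw [dRR yu hyu yv hyv (by simpa using huv), dRL yv hyv cw hcw,
        dRL yu hyu cw hcw] at heq; omega
    · rw [dRR yu hyu yv hyv (by simpa using huv), dRR yv hyv yw hyw (by simpa using hvw),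
        dRR yu hyu yw hyw (by simpa using huw)] at heq; omega
  -- ===================== Conclusion =====================
  have hmem : Fintype.card V ∈
      {n : ℕ | ∃ S : Set (V ⊕ V), isGenPosSet (compPrism G) S ∧ S.ncard = n} :=
    ⟨S0, hgp0, hcard0⟩
  have hub : ∀ n ∈ {n : ℕ | ∃ S : Set (V ⊕ V), isGenPosSet (compPrism G) S ∧ S.ncard = n},
      n ≤ Fintype.card V := by
    rintro n ⟨S, hSgp, rfl⟩
    exact key S hSgp
  exact le_antisymm (csSup_le ⟨_, hmem⟩ hub) (le_csSup ⟨Fintype.card V, fun n hn => hub n hn⟩ hmem)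
end

section
/- For every k ≥ 0, the graph G_k satisfies gp₃(G_k) = k + 3, where G_k is the block graph with vertex set {v_1, …, v_{k+2}} ∪ {u_1, …, u_{k+1}} whose edges are v_i v_{i+1}, u_i v_i and u_i v_{i+1} for 1 ≤ i ≤ k+1. -/
open SimpleGraph

variable {V : Type*}

namespace GkAux

open SimpleGraph Walk

variable {k : ℕ}

abbrev Vk (k : ℕ) := Fin (k + 2) ⊕ Fin (k + 1)

def phi : Vk k → ℕ
  | Sum.inl a => 2 * a.val
  | Sum.inr i => 2 * i.val + 1

@[simp] lemma phi_inl (a : Fin (k+2)) : phi (Sum.inl a : Vk k) = 2 * a.val := rfl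
@[simp] lemma phi_inr (i : Fin (k+1)) : phi (Sum.inr i : Vk k) = 2 * i.val + 1 := rfl

lemma adj_ll {a b : Fin (k+2)} :
    (Gk k).Adj (Sum.inl a) (Sum.inl b) ↔ (a.val + 1 = b.val ∨ b.val + 1 = a.val) := Iff.rfl

lemma adj_lr {a : Fin (k+2)} {i : Fin (k+1)} :
    (Gk k).Adj (Sum.inl a) (Sum.inr i) ↔ (a.val = i.val ∨ a.val = i.val + 1) := Iff.rfl

lemma adj_rl {a : Fin (k+2)} {i : Fin (k+1)} :
    (Gk k).Adj (Sum.inr i) (Sum.inl a) ↔ (a.val = i.val ∨ a.val = i.val + 1) := Iff.rfl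

lemma adj_rr {i j : Fin (k+1)} : ¬ (Gk k).Adj (Sum.inr i) (Sum.inr j) := fun h => h

lemma walkV : ∀ (n : ℕ) (a b : Fin (k+2)), a.val + n = b.val →
    ∃ p : (Gk k).Walk (Sum.inl a) (Sum.inl b), p.length = n := by
  intro n
  induction n with
  | zero =>
    intro a b h
    have : a = b := Fin.ext (by omega)
    subst this
    exact ⟨Walk.nil, rfl⟩
  | succ n ih =>
    intro a b h
    have hb := b.isLt
    have ha : a.val + 1 < k + 2 := by omega
    obtain ⟨p, hp⟩ := ih ⟨a.val + 1, ha⟩ b (show a.val + 1 + n = b.val by omega)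
    exact ⟨Walk.cons (adj_ll.mpr (Or.inl rfl)) p, by simp [hp]⟩

lemma reach0 (x : Vk k) : (Gk k).Reachable (Sum.inl ⟨0, by omega⟩) x := by
  cases x with
  | inl a =>
    obtain ⟨p, _⟩ := walkV a.val ⟨0, by omega⟩ a (show 0 + a.val = a.val by omega)
    exact ⟨p⟩
  | inr i =>
    have hi := i.isLt
    obtain ⟨p, _⟩ := walkV i.val ⟨0, by omega⟩ ⟨i.val, Nat.lt_succ_of_lt i.isLt⟩
      (show 0 + i.val = i.val by omega)
    exact ⟨p.append (Walk.cons (adj_lr.mpr (Or.inl rfl)) Walk.nil)⟩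

lemma conn : (Gk k).Connected := by
  rw [connected_iff]
  exact ⟨fun x y => (reach0 x).symm.trans (reach0 y), ⟨Sum.inl ⟨0, by omega⟩⟩⟩

lemma phi_adj {x y : Vk k} (h : (Gk k).Adj x y) : phi x ≤ phi y + 2 ∧ phi y ≤ phi x + 2 := by
  rcases x with a | i <;> rcases y with b | j
  · rcases adj_ll.mp h with h | h <;> simp <;> omega
  · rcases adj_lr.mp h with h | h <;> simp <;> omega
  · rcases adj_rl.mp h with h | h <;> simp <;> omega
  · exact absurd h adj_rr

lemma phi_walk {x y : Vk k} (p : (Gk k).Walk x y) :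
    phi x ≤ phi y + 2 * p.length ∧ phi y ≤ phi x + 2 * p.length := by
  induction p with
  | nil => simp
  | cons h q ih =>
    have h2 := phi_adj h
    simp only [Walk.length_cons]
    omega

lemma phi_dist (x y : Vk k) :
    phi x ≤ phi y + 2 * (Gk k).dist x y ∧ phi y ≤ phi x + 2 * (Gk k).dist x y := by
  obtain ⟨p, hp⟩ := conn.exists_walk_length_eq_dist x y
  have h := phi_walk p
  rw [hp] at h
  exact h

lemma ub_vv {a b : Fin (k+2)} (h : a.val ≤ b.val) :
    (Gk k).dist (Sum.inl a) (Sum.inl b) ≤ b.val - a.val := by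
  obtain ⟨p, hp⟩ := walkV (b.val - a.val) a b (by omega)
  exact hp ▸ dist_le p

lemma ub_vu {a : Fin (k+2)} {i : Fin (k+1)} (h : a.val ≤ i.val) :
    (Gk k).dist (Sum.inl a) (Sum.inr i) ≤ i.val + 1 - a.val := by
  have hi := i.isLt
  obtain ⟨p, hp⟩ := walkV (i.val - a.val) a ⟨i.val, by omega⟩
    (show a.val + (i.val - a.val) = i.val by omega)
  have hq := dist_le (p.append (Walk.cons (adj_lr.mpr (Or.inl rfl)) Walk.nil))
  simp [hp] at hq
  omega

lemma ub_uv {a : Fin (k+2)} {i : Fin (k+1)} (h : i.val < a.val) :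
    (Gk k).dist (Sum.inr i) (Sum.inl a) ≤ a.val - i.val := by
  have hi := i.isLt
  have ha := a.isLt
  obtain ⟨p, hp⟩ := walkV (a.val - i.val - 1) ⟨i.val + 1, by omega⟩ a
    (show i.val + 1 + (a.val - i.val - 1) = a.val by omega)
  have hq := dist_le (Walk.cons (adj_rl.mpr (Or.inr rfl)) p)
  simp [hp] at hq
  omega

lemma ub_uu {i j : Fin (k+1)} (h : i.val < j.val) :
    (Gk k).dist (Sum.inr i) (Sum.inr j) ≤ j.val - i.val + 1 := by
  have hi := i.isLt
  have hj := j.isLt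
  obtain ⟨p, hp⟩ := walkV (j.val - i.val - 1) ⟨i.val + 1, Nat.succ_lt_succ i.isLt⟩
    ⟨j.val, Nat.lt_succ_of_lt j.isLt⟩
    (show i.val + 1 + (j.val - i.val - 1) = j.val by omega)
  have hq := dist_le (Walk.cons (adj_rl.mpr (Or.inr rfl))
    (p.append (Walk.cons (adj_lr.mpr (Or.inl rfl)) Walk.nil)))
  simp [hp] at hq
  omega

lemma lb_uu {i j : Fin (k+1)} (h : i ≠ j) :
    j.val + 1 ≤ i.val + (Gk k).dist (Sum.inr i) (Sum.inr j) ∧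
    i.val + 1 ≤ j.val + (Gk k).dist (Sum.inr i) (Sum.inr j) := by
  have hne : (Sum.inr i : Vk k) ≠ Sum.inr j := by simpa using h
  obtain ⟨p, hp⟩ := conn.exists_walk_length_eq_dist (Sum.inr i : Vk k) (Sum.inr j)
  obtain ⟨w, hadj, q, rfl⟩ := Walk.exists_eq_cons_of_ne hne p
  rcases w with b | m
  · have hb := adj_rl.mp hadj
    have hq := phi_walk q
    simp only [Walk.length_cons] at hp
    simp only [phi_inl, phi_inr] at hq
    omega
  · exact absurd hadj adj_rr

/-- forbidden triple u_{a-1}, v_a, u_a -/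
lemma T1 {S : Set (Vk k)} (hS : isGP3Set (Gk k) S) {i j : Fin (k+1)} {a : Fin (k+2)}
    (hai : a.val = i.val + 1) (hja : j.val = a.val)
    (h1 : Sum.inr i ∈ S) (h2 : Sum.inl a ∈ S) (h3 : Sum.inr j ∈ S) : False := by
  have hij : i ≠ j := by
    intro h; rw [h] at hai; omega
  have hij' : i.val < j.val := by omega
  have d1 : (Gk k).dist (Sum.inr i : Vk k) (Sum.inl a) = 1 :=
    dist_eq_one_iff_adj.mpr (adj_rl.mpr (Or.inr hai))
  have d2 : (Gk k).dist (Sum.inl a : Vk k) (Sum.inr j) = 1 :=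
    dist_eq_one_iff_adj.mpr (adj_lr.mpr (Or.inl hja.symm))
  have hd0 : 0 < (Gk k).dist (Sum.inr i : Vk k) (Sum.inr j) :=
    conn.pos_dist_of_ne (by simpa using hij)
  have hd1 : (Gk k).dist (Sum.inr i : Vk k) (Sum.inr j) ≠ 1 := by
    intro h; exact adj_rr (dist_eq_one_iff_adj.mp h)
  have hdu := ub_uu (k := k) hij'
  have d3 : (Gk k).dist (Sum.inr i : Vk k) (Sum.inr j) = 2 := by omega
  exact hS _ h1 _ h2 _ h3 (by simp) (by simp) (by simpa using hij)
    ⟨⟨conn _ _, by rw [d1, d2, d3]⟩, by rw [d3]; omega⟩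

/-- forbidden triple u_{a-1}, v_a, v_{a+1} -/
lemma T2 {S : Set (Vk k)} (hS : isGP3Set (Gk k) S) {i : Fin (k+1)} {a b : Fin (k+2)}
    (hai : a.val = i.val + 1) (hba : b.val = a.val + 1)
    (h1 : Sum.inr i ∈ S) (h2 : Sum.inl a ∈ S) (h3 : Sum.inl b ∈ S) : False := by
  have hab : a ≠ b := by intro h; rw [h] at hai; omega
  have hib : i.val < b.val := by omega
  have d1 : (Gk k).dist (Sum.inr i : Vk k) (Sum.inl a) = 1 :=
    dist_eq_one_iff_adj.mpr (adj_rl.mpr (Or.inr hai))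
  have d2 : (Gk k).dist (Sum.inl a : Vk k) (Sum.inl b) = 1 :=
    dist_eq_one_iff_adj.mpr (adj_ll.mpr (Or.inl hba.symm))
  have hd0 : 0 < (Gk k).dist (Sum.inr i : Vk k) (Sum.inl b) :=
    conn.pos_dist_of_ne (by simp)
  have hd1 : (Gk k).dist (Sum.inr i : Vk k) (Sum.inl b) ≠ 1 := by
    intro h
    rcases adj_rl.mp (dist_eq_one_iff_adj.mp h) with h' | h' <;> omega
  have hdu := ub_uv (k := k) hib
  have d3 : (Gk k).dist (Sum.inr i : Vk k) (Sum.inl b) = 2 := by omega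
  exact hS _ h1 _ h2 _ h3 (by simp) (by simpa using hab)
    (by simp) ⟨⟨conn _ _, by rw [d1, d2, d3]⟩, by rw [d3]; omega⟩

set_option maxHeartbeats 1000000 in
lemma card_ub {S : Set (Vk k)} (hS : isGP3Set (Gk k) S) : S.ncard ≤ k + 3 := by
  classical
  set E2 : Set (Vk k) := {Sum.inl ⟨0, by omega⟩, Sum.inl ⟨k+1, by omega⟩} with hE2
  have hsplit : S ⊆ (S \ E2) ∪ E2 := by
    intro x hx
    by_cases h : x ∈ E2
    · exact Or.inr h
    · exact Or.inl ⟨hx, h⟩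
  have h1 : S.ncard ≤ (S \ E2).ncard + E2.ncard :=
    le_trans (Set.ncard_le_ncard hsplit (Set.toFinite _)) (Set.ncard_union_le _ _)
  have hE2card : E2.ncard ≤ 2 :=
    le_trans (Set.ncard_insert_le _ _) (by simp)
  have hmain : (S \ E2).ncard ≤ k + 1 := by
    have hcard : ((Finset.range (k+1) : Finset ℕ) : Set ℕ).ncard = k + 1 := by
      rw [Set.ncard_coe_finset, Finset.card_range]
    rw [← hcard]
    apply Set.ncard_le_ncard_of_injOn
      (Sum.elim
        (fun a : Fin (k+2) =>
          if Sum.inr (⟨a.val - 1, by have := a.isLt; omega⟩ : Fin (k+1)) ∈ S then a.val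
          else a.val - 1)
        (fun i : Fin (k+1) => i.val))
    · rintro (a | i) hx
      · have haE : a.val ≠ 0 ∧ a.val ≠ k + 1 := by
          have := hx.2
          simp only [hE2, Set.mem_insert_iff, Set.mem_singleton_iff, not_or,
            Sum.inl.injEq, Fin.ext_iff, Fin.val_mk] at this
          exact this
        have ha := a.isLt
        simp only [Sum.elim_inl, Finset.coe_range, Set.mem_Iio]
        split_ifs <;> omega
      · simp only [Sum.elim_inr, Finset.coe_range, Set.mem_Iio]
        exact i.isLt
    · intro x hx y hy hxy
      have hxS := hx.1
      have hyS := hy.1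
      rcases x with a | i <;> rcases y with b | j
      · -- inl a, inl b
        have haE : a.val ≠ 0 ∧ a.val ≠ k + 1 := by
          have := hx.2
          simp only [hE2, Set.mem_insert_iff, Set.mem_singleton_iff, not_or,
            Sum.inl.injEq, Fin.ext_iff, Fin.val_mk] at this
          exact this
        have hbE : b.val ≠ 0 ∧ b.val ≠ k + 1 := by
          have := hy.2
          simp only [hE2, Set.mem_insert_iff, Set.mem_singleton_iff, not_or,
            Sum.inl.injEq, Fin.ext_iff, Fin.val_mk] at this
          exact this
        have ha := a.isLt
        have hb := b.isLt
        simp only [Sum.elim_inl] at hxy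
        split_ifs at hxy with c1 c2 c2
        · exact congrArg _ (Fin.ext hxy)
        · -- a.val = b.val - 1
          exact absurd (T2 hS (i := ⟨a.val - 1, by omega⟩) (a := a) (b := b)
            (show a.val = a.val - 1 + 1 by omega) (by omega) c1 hxS hyS) not_false
        · exact absurd (T2 hS (i := ⟨b.val - 1, by omega⟩) (a := b) (b := a)
            (show b.val = b.val - 1 + 1 by omega) (by omega) c2 hyS hxS) not_false
        · exact congrArg _ (Fin.ext (by omega))
      · -- inl a, inr j
        have haE : a.val ≠ 0 ∧ a.val ≠ k + 1 := by
          have := hx.2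
          simp only [hE2, Set.mem_insert_iff, Set.mem_singleton_iff, not_or,
            Sum.inl.injEq, Fin.ext_iff, Fin.val_mk] at this
          exact this
        have ha := a.isLt
        simp only [Sum.elim_inl, Sum.elim_inr] at hxy
        split_ifs at hxy with c1
        · exact absurd (T1 hS (i := ⟨a.val - 1, by omega⟩) (a := a) (j := j)
            (show a.val = a.val - 1 + 1 by omega) (by omega) c1 hxS hyS) not_false
        · have hj : (⟨a.val - 1, by omega⟩ : Fin (k+1)) = j :=
            Fin.ext (show a.val - 1 = j.val by omega)
          exact absurd (hj ▸ hyS) c1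
      · -- inr i, inl b
        have hbE : b.val ≠ 0 ∧ b.val ≠ k + 1 := by
          have := hy.2
          simp only [hE2, Set.mem_insert_iff, Set.mem_singleton_iff, not_or,
            Sum.inl.injEq, Fin.ext_iff, Fin.val_mk] at this
          exact this
        have hb := b.isLt
        simp only [Sum.elim_inl, Sum.elim_inr] at hxy
        split_ifs at hxy with c1
        · exact absurd (T1 hS (i := ⟨b.val - 1, by omega⟩) (a := b) (j := i)
            (show b.val = b.val - 1 + 1 by omega) (by omega) c1 hyS hxS) not_false
        · have hi : (⟨b.val - 1, by omega⟩ : Fin (k+1)) = i :=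
            Fin.ext (show b.val - 1 = i.val by omega)
          exact absurd (hi ▸ hxS) c1
      · -- inr i, inr j
        simp only [Sum.elim_inr] at hxy
        exact congrArg _ (Fin.ext hxy)
  omega

def S0 (k : ℕ) : Set (Vk k) :=
  Set.range Sum.inr ∪ {Sum.inl ⟨0, by omega⟩, Sum.inl ⟨k+1, by omega⟩}

lemma S0_card : (S0 k).ncard = k + 3 := by
  have hd : Disjoint (Set.range (Sum.inr : Fin (k+1) → Vk k))
      ({Sum.inl ⟨0, by omega⟩, Sum.inl ⟨k+1, by omega⟩} : Set (Vk k)) := by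
    rw [Set.disjoint_left]
    rintro x ⟨i, rfl⟩ h
    simp at h
  rw [S0, Set.ncard_union_eq hd (Set.toFinite _) (Set.toFinite _)]
  have h1 : (Set.range (Sum.inr : Fin (k+1) → Vk k)).ncard = k + 1 := by
    rw [← Set.image_univ, Set.ncard_image_of_injective _ Sum.inr_injective,
        Set.ncard_univ]
    simp
  have h2 : ({Sum.inl ⟨0, by omega⟩, Sum.inl ⟨k+1, by omega⟩} : Set (Vk k)).ncard = 2 := by
    rw [Set.ncard_pair]
    simp [Fin.ext_iff]
  omega

set_option maxHeartbeats 2000000 in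
lemma S0_gp3 : isGP3Set (Gk k) (S0 k) := by
  intro u hu v hv w hw huv hvw huw
  rintro ⟨⟨-, heq⟩, -⟩
  simp only [S0, Set.mem_union, Set.mem_range, Set.mem_insert_iff,
    Set.mem_singleton_iff] at hu hv hw
  rcases hu with ⟨i, rfl⟩ | rfl | rfl <;> rcases hv with ⟨m, rfl⟩ | rfl | rfl <;>
    rcases hw with ⟨j, rfl⟩ | rfl | rfl
  -- u = inr i, v = inr m, w = inr j
  · have him : i ≠ m := by simpa using huv
    have hmj : m ≠ j := by simpa using hvw
    have hij : i ≠ j := by simpa using huw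
    have l1 := lb_uu (k := k) him
    have l2 := lb_uu (k := k) hmj
    rcases Nat.lt_or_ge i.val j.val with h | h
    · have u3 := ub_uu (k := k) h
      omega
    · have h' : j.val < i.val := by
        rcases Nat.lt_or_ge j.val i.val with h' | h'
        · exact h'
        · exact absurd (Fin.ext (by omega)) hij
      have u3 := ub_uu (k := k) h'
      rw [dist_comm] at u3
      omega
  -- u = inr i, v = inr m, w = inl 0
  · have him : i ≠ m := by simpa using huv
    have l1 := lb_uu (k := k) him
    have l2 := phi_dist (Sum.inr m : Vk k) (Sum.inl ⟨0, by omega⟩)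
    have u3 := ub_vu (k := k) (a := ⟨0, by omega⟩) (i := i) (Nat.zero_le _)
    rw [dist_comm] at u3
    simp only [phi_inl, phi_inr, Fin.val_mk] at l2
    omega
  -- u = inr i, v = inr m, w = inl (k+1)
  · have him : i ≠ m := by simpa using huv
    have l1 := lb_uu (k := k) him
    have l2 := phi_dist (Sum.inr m : Vk k) (Sum.inl ⟨k+1, by omega⟩)
    have u3 := ub_uv (k := k) (a := ⟨k+1, by omega⟩) (i := i) i.isLt
    simp only [phi_inl, phi_inr, Fin.val_mk] at l2
    have hm := m.isLt
    have hi := i.isLt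
    omega
  -- u = inr i, v = inl 0, w = inr j
  · have hij : i ≠ j := by simpa using huw
    have l1 := phi_dist (Sum.inr i : Vk k) (Sum.inl ⟨0, by omega⟩)
    have l2 := phi_dist (Sum.inl ⟨0, by omega⟩ : Vk k) (Sum.inr j)
    simp only [phi_inl, phi_inr, Fin.val_mk] at l1 l2
    rcases Nat.lt_or_ge i.val j.val with h | h
    · have u3 := ub_uu (k := k) h
      omega
    · have h' : j.val < i.val := by
        rcases Nat.lt_or_ge j.val i.val with h' | h'
        · exact h'
        · exact absurd (Fin.ext (by omega)) hij
      have u3 := ub_uu (k := k) h'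
      rw [dist_comm] at u3
      omega
  · exact hvw rfl
  -- u = inr i, v = inl 0, w = inl (k+1)
  · have l1 := phi_dist (Sum.inr i : Vk k) (Sum.inl ⟨0, by omega⟩)
    have l2 := phi_dist (Sum.inl ⟨0, by omega⟩ : Vk k) (Sum.inl ⟨k+1, by omega⟩)
    have u3 := ub_uv (k := k) (a := ⟨k+1, by omega⟩) (i := i) i.isLt
    simp only [phi_inl, phi_inr, Fin.val_mk] at l1 l2
    have hi := i.isLt
    omega
  -- u = inr i, v = inl (k+1), w = inr j
  · have hij : i ≠ j := by simpa using huw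
    have l1 := phi_dist (Sum.inr i : Vk k) (Sum.inl ⟨k+1, by omega⟩)
    have l2 := phi_dist (Sum.inl ⟨k+1, by omega⟩ : Vk k) (Sum.inr j)
    simp only [phi_inl, phi_inr, Fin.val_mk] at l1 l2
    have hi := i.isLt
    have hj := j.isLt
    rcases Nat.lt_or_ge i.val j.val with h | h
    · have u3 := ub_uu (k := k) h
      omega
    · have h' : j.val < i.val := by
        rcases Nat.lt_or_ge j.val i.val with h' | h'
        · exact h'
        · exact absurd (Fin.ext (by omega)) hij
      have u3 := ub_uu (k := k) h'
      rw [dist_comm] at u3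
      omega
  -- u = inr i, v = inl (k+1), w = inl 0
  · have l1 := phi_dist (Sum.inr i : Vk k) (Sum.inl ⟨k+1, by omega⟩)
    have l2 := phi_dist (Sum.inl ⟨k+1, by omega⟩ : Vk k) (Sum.inl ⟨0, by omega⟩)
    have u3 := ub_vu (k := k) (a := ⟨0, by omega⟩) (i := i) (Nat.zero_le _)
    rw [dist_comm] at u3
    simp only [phi_inl, phi_inr, Fin.val_mk] at l1 l2
    have hi := i.isLt
    omega
  · exact hvw rfl
  -- u = inl 0, v = inr m, w = inr j
  · have hmj : m ≠ j := by simpa using hvw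
    have l1 := phi_dist (Sum.inl ⟨0, by omega⟩ : Vk k) (Sum.inr m)
    have l2 := lb_uu (k := k) hmj
    have u3 := ub_vu (k := k) (a := ⟨0, by omega⟩) (i := j) (Nat.zero_le _)
    simp only [phi_inl, phi_inr, Fin.val_mk] at l1
    omega
  · exact huw rfl
  -- u = inl 0, v = inr m, w = inl (k+1)
  · have l1 := phi_dist (Sum.inl ⟨0, by omega⟩ : Vk k) (Sum.inr m)
    have l2 := phi_dist (Sum.inr m : Vk k) (Sum.inl ⟨k+1, by omega⟩)
    have u3 := ub_vv (k := k) (a := ⟨0, by omega⟩) (b := ⟨k+1, by omega⟩) (Nat.zero_le _)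
    simp only [phi_inl, phi_inr, Fin.val_mk] at l1 l2
    have hm := m.isLt
    omega
  · exact huv rfl
  · exact huv rfl
  · exact huv rfl
  -- u = inl 0, v = inl (k+1), w = inr j
  · have l1 := phi_dist (Sum.inl ⟨0, by omega⟩ : Vk k) (Sum.inl ⟨k+1, by omega⟩)
    have l2 := phi_dist (Sum.inl ⟨k+1, by omega⟩ : Vk k) (Sum.inr j)
    have u3 := ub_vu (k := k) (a := ⟨0, by omega⟩) (i := j) (Nat.zero_le _)
    simp only [phi_inl, phi_inr, Fin.val_mk] at l1 l2
    have hj := j.isLt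
    omega
  · exact huw rfl
  · exact hvw rfl
  -- u = inl (k+1), v = inr m, w = inr j
  · have hmj : m ≠ j := by simpa using hvw
    have l1 := phi_dist (Sum.inl ⟨k+1, by omega⟩ : Vk k) (Sum.inr m)
    have l2 := lb_uu (k := k) hmj
    have u3 := ub_uv (k := k) (a := ⟨k+1, by omega⟩) (i := j) j.isLt
    rw [dist_comm] at u3
    simp only [phi_inl, phi_inr, Fin.val_mk] at l1
    have hm := m.isLt
    have hj := j.isLt
    omega
  -- u = inl (k+1), v = inr m, w = inl 0
  · have l1 := phi_dist (Sum.inl ⟨k+1, by omega⟩ : Vk k) (Sum.inr m)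
    have l2 := phi_dist (Sum.inr m : Vk k) (Sum.inl ⟨0, by omega⟩)
    have u3 := ub_vv (k := k) (a := ⟨0, by omega⟩) (b := ⟨k+1, by omega⟩) (Nat.zero_le _)
    rw [dist_comm (u := (Sum.inl ⟨0, by omega⟩ : Vk k))] at u3
    simp only [phi_inl, phi_inr, Fin.val_mk] at l1 l2
    have hm := m.isLt
    omega
  · exact huw rfl
  -- u = inl (k+1), v = inl 0, w = inr j
  · have l1 := phi_dist (Sum.inl ⟨k+1, by omega⟩ : Vk k) (Sum.inl ⟨0, by omega⟩)
    have l2 := phi_dist (Sum.inl ⟨0, by omega⟩ : Vk k) (Sum.inr j)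
    have u3 := ub_uv (k := k) (a := ⟨k+1, by omega⟩) (i := j) j.isLt
    rw [dist_comm] at u3
    simp only [phi_inl, phi_inr, Fin.val_mk] at l1 l2
    have hj := j.isLt
    omega
  · exact hvw rfl
  · exact huw rfl
  · exact huv rfl
  · exact huv rfl
  · exact huv rfl

end GkAux

/-- For every `k ≥ 0`, the chain of `k+1` triangles `G_k` satisfies
`gp₃(G_k) = k + 3`. -/
theorem gp3_Gk (k : ℕ) : gp3Num (Gk k) = k + 3 := by
  have hub : ∀ n ∈ {n : ℕ | ∃ S : Set (GkAux.Vk k), isGP3Set (Gk k) S ∧ S.ncard = n},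
      n ≤ k + 3 := by
    rintro n ⟨S, hS, rfl⟩
    exact GkAux.card_ub hS
  have hmem : k + 3 ∈ {n : ℕ | ∃ S : Set (GkAux.Vk k), isGP3Set (Gk k) S ∧ S.ncard = n} :=
    ⟨GkAux.S0 k, GkAux.S0_gp3, GkAux.S0_card⟩
  exact le_antisymm (csSup_le ⟨k + 3, hmem⟩ hub) (le_csSup ⟨k + 3, hub⟩ hmem)
end
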